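/- arXiv:1406.6474 — 5 statements merged into one kernel-verified Lean document; each statement's English description precedes it below -/
import Mathlib

section
/- Let R ≥ 2, let V be a ground set of N elements, and for each r = 1, …, R let A_{r1}, …, A_{rM_r} be a partition of V into disjoint nonempty sets. Let G be the weighted graph whose vertices are the pairs (r,m) with 1 ≤ r ≤ R, 1 ≤ m ≤ M_r, and where the edge between (r₁,m₁) and (r₂,m₂) has weight |A_{r₁m₁} ∩ A_{r₂m₂}|. If G is connected, then its Cheeger constant satisfies h_G ≥ 2/(NR), and the second-smallest eigenvalue of its symmetric normalized Laplacian ℒ satisfies λ₂(ℒ) ≥ 2/(N²R²). -/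
open Finset

noncomputable section

private lemma stmt6_sq_pairs_sum {ι : Type*} [Fintype ι] (f : ι → ℝ) :
    ∑ p : ι, ∑ q : ι, (f p - f q)^2
      = 2 * Fintype.card ι * (∑ p : ι, f p ^ 2) - 2 * (∑ p : ι, f p)^2 := by
  set C : ℝ := (Fintype.card ι : ℝ) with hC
  set S : ℝ := ∑ q : ι, f q with hS
  set T : ℝ := ∑ q : ι, f q ^ 2 with hT
  have h : ∀ p : ι, ∑ q : ι, (f p - f q)^2 = C * f p ^ 2 - (2 * S) * f p + T := by
    intro p
    have h2 : ∀ q : ι, (f p - f q)^2 = f p ^2 - (2 * f p) * f q + f q ^2 := fun q => by ring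
    rw [Finset.sum_congr rfl fun q _ => h2 q]
    rw [Finset.sum_add_distrib, Finset.sum_sub_distrib, Finset.sum_const, ← Finset.mul_sum]
    simp only [Finset.card_univ, nsmul_eq_mul, ← hS, ← hT, ← hC]
    ring
  rw [Finset.sum_congr rfl fun p _ => h p]
  rw [Finset.sum_add_distrib, Finset.sum_sub_distrib, ← Finset.mul_sum, ← Finset.mul_sum,
    Finset.sum_const]
  simp only [Finset.card_univ, nsmul_eq_mul, ← hS, ← hT, ← hC]
  ring_nf

-- block bound: two within-block values
private lemma stmt6_two_sq_le_block {R : ℕ} (g : Fin R → ℝ) (r r' : Fin R) :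
    2 * (g r - g r')^2 ≤ ∑ s : Fin R, ∑ t : Fin R, (g s - g t)^2 := by
  by_cases h : r = r'
  · subst h; simp; positivity
  · have hsub : ({(r, r'), (r', r)} : Finset (Fin R × Fin R)) ⊆ Finset.univ ×ˢ Finset.univ := by
      intro p _; simp
    have hsum : ∑ p ∈ ({(r, r'), (r', r)} : Finset (Fin R × Fin R)), (g p.1 - g p.2)^2
        = 2 * (g r - g r')^2 := by
      rw [Finset.sum_pair (by simp [h, Ne.symm h])]
      ring_nf
    calc 2 * (g r - g r')^2
        = ∑ p ∈ ({(r, r'), (r', r)} : Finset (Fin R × Fin R)), (g p.1 - g p.2)^2 := hsum.symm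
      _ ≤ ∑ p ∈ Finset.univ ×ˢ Finset.univ, (g p.1 - g p.2)^2 :=
          Finset.sum_le_sum_of_subset_of_nonneg hsub (fun p _ _ => by positivity)
      _ = ∑ s : Fin R, ∑ t : Fin R, (g s - g t)^2 := by rw [← Finset.sum_product']

private lemma stmt6_walk_bound {α : Type*} {R : ℕ} (H : SimpleGraph α)
    (u : α → Fin R → ℝ)
    (hadj : ∀ {a b : α}, H.Adj a b → ∃ r₀, u a r₀ = u b r₀) :
    ∀ {a b : α} (P : H.Walk a b), P.IsPath → ∀ r r' : Fin R,
      2 * (u a r - u b r')^2 ≤ (P.length + 1) *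
        (P.support.map (fun n => ∑ s : Fin R, ∑ t : Fin R, (u n s - u n t)^2)).sum := by
  intro a b P
  induction P with
  | nil =>
    rename_i v
    intro _ r r'
    simp only [SimpleGraph.Walk.length_nil, SimpleGraph.Walk.support_nil, List.map_cons,
      List.map_nil, List.sum_cons, List.sum_nil, Nat.cast_zero]
    have := stmt6_two_sq_le_block (u v) r r'
    push_cast
    linarith
  | @cons a c b h P ih =>
    intro hp r r'
    obtain ⟨r₀, hr₀⟩ := hadj h
    rw [SimpleGraph.Walk.cons_isPath_iff] at hp
    have ihb := ih hp.1 r₀ r'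
    have hBa := stmt6_two_sq_le_block (u a) r r₀
    set Ba : ℝ := ∑ s : Fin R, ∑ t : Fin R, (u a s - u a t)^2 with hBadef
    set S' : ℝ := (P.support.map (fun n => ∑ s : Fin R, ∑ t : Fin R, (u n s - u n t)^2)).sum with hS'def
    have hS'nonneg : 0 ≤ S' := by
      rw [hS'def]
      apply List.sum_nonneg
      intro x hx
      simp only [List.mem_map] at hx
      obtain ⟨n, _, rfl⟩ := hx
      positivity
    simp only [SimpleGraph.Walk.length_cons, SimpleGraph.Walk.support_cons, List.map_cons,
      List.sum_cons, ← hBadef, ← hS'def]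
    push_cast
    set l : ℝ := (P.length : ℝ) with hl
    have hlnn : 0 ≤ l := by positivity
    have key : (u a r - u b r') = (u a r - u a r₀) + (u c r₀ - u b r') := by
      rw [hr₀]; ring
    rw [key]
    set x : ℝ := u a r - u a r₀
    set y : ℝ := u c r₀ - u b r'
    have h1 : (l+2)*(2*y^2) ≤ (l+2)*((l+1)*S') :=
      mul_le_mul_of_nonneg_left ihb (by linarith)
    have h2 : ((l+1)*(l+2))*(2*x^2) ≤ ((l+1)*(l+2))*Ba :=
      mul_le_mul_of_nonneg_left hBa (by nlinarith)
    have hpos : (0:ℝ) < l + 1 := by linarith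
    have key2 : (l+1) * (2*(x+y)^2) ≤ (l+1) * ((l + 1 + 1)*(Ba+S')) := by
      nlinarith [sq_nonneg ((l+1)*x - y)]
    have := le_of_mul_le_mul_left key2 hpos
    linarith

set_option maxHeartbeats 4000000 in
theorem stmt6 {N R : ℕ} (hR : 2 ≤ R) (M : Fin R → ℕ)
    (A : (r : Fin R) → Fin (M r) → Finset (Fin N))
    (hAne : ∀ r m, (A r m).Nonempty)
    (hpart : ∀ (r : Fin R) (n : Fin N), ∃! m : Fin (M r), n ∈ A r m)
    -- the weighted graph on vertices (r, m)
    (w : ((r : Fin R) × Fin (M r)) → ((r : Fin R) × Fin (M r)) → ℝ)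
    (hw : ∀ i j, w i j = if i = j then 0 else ((A i.1 i.2 ∩ A j.1 j.2).card : ℝ))
    (δ : ((r : Fin R) × Fin (M r)) → ℝ) (hδ : ∀ i, δ i = ∑ j, w i j)
    (vol : Finset ((r : Fin R) × Fin (M r)) → ℝ) (hvol : ∀ U, vol U = ∑ i ∈ U, δ i)
    (cut : Finset ((r : Fin R) × Fin (M r)) → ℝ)
    (hcut : ∀ U, cut U = ∑ i ∈ U, ∑ j ∈ Uᶜ, w i j)
    -- G is connected
    (hconn : ∀ U : Finset ((r : Fin R) × Fin (M r)),
      U.Nonempty → U ≠ univ → 0 < cut U)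
    -- the Cheeger constant
    (hG : ℝ)
    (hhG : hG = sInf {t | ∃ U : Finset ((r : Fin R) × Fin (M r)),
      U.Nonempty ∧ U ≠ univ ∧ t = cut U / min (vol U) (vol Uᶜ)})
    -- the symmetric normalized Laplacian
    (L : Matrix ((r : Fin R) × Fin (M r)) ((r : Fin R) × Fin (M r)) ℝ)
    (hL : ∀ i j, L i j = (if i = j then δ i else -(w i j)) / Real.sqrt (δ i * δ j)) :
    2 / (N * R) ≤ hG ∧
    ∀ (lam : ℝ) (x : ((r : Fin R) × Fin (M r)) → ℝ),
      x ≠ 0 → L.mulVec x = lam • x → lam ≠ 0 → 2 / ((N : ℝ) ^ 2 * R ^ 2) ≤ lam := by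
  classical
  obtain hV | hV := isEmpty_or_nonempty ((r : Fin R) × Fin (M r))
  · -- degenerate: no vertices, so N = 0
    have hN0 : N = 0 := by
      by_contra h
      have hn : 0 < N := Nat.pos_of_ne_zero h
      have hR0 : 0 < R := by omega
      exact hV.false ⟨⟨0, hR0⟩, (hpart ⟨0, hR0⟩ ⟨0, hn⟩).exists.choose⟩
    constructor
    · have hset : {t | ∃ U : Finset ((r : Fin R) × Fin (M r)),
          U.Nonempty ∧ U ≠ univ ∧ t = cut U / min (vol U) (vol Uᶜ)} = ∅ := by
        ext t
        simp only [Set.mem_setOf_eq, Set.mem_empty_iff_false, iff_false]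
        rintro ⟨U, ⟨i, _⟩, -, -⟩
        exact hV.false i
      rw [hhG, hset, Real.sInf_empty, hN0]
      norm_num
    · intro lam x hx heig hlam
      exact absurd (funext fun i => (hV.false i).elim) hx
  · obtain ⟨v₀⟩ := hV
    obtain ⟨nn, hnn⟩ := hAne v₀.1 v₀.2
    have hN : 0 < N := nn.pos
    set c : (r : Fin R) → Fin N → Fin (M r) := fun r n => (hpart r n).exists.choose with hcdef
    have hc : ∀ (r : Fin R) (n : Fin N), n ∈ A r (c r n) := fun r n => (hpart r n).exists.choose_spec
    have hcu : ∀ (r : Fin R) (n : Fin N) (m : Fin (M r)), n ∈ A r m → m = c r n := by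
      intro r n m hm
      obtain ⟨m', hm', hu⟩ := hpart r n
      rw [hu m hm, hu (c r n) (hc r n)]
    set v : Fin R → Fin N → ((r : Fin R) × Fin (M r)) := fun r n => ⟨r, c r n⟩ with hvdef
    set W : ((r : Fin R) × Fin (M r)) → ((r : Fin R) × Fin (M r)) → ℝ :=
      fun i j => ∑ n : Fin N,
        (if n ∈ A i.1 i.2 then (1:ℝ) else 0) * (if n ∈ A j.1 j.2 then (1:ℝ) else 0) with hWdef
    -- indicator sum lemma
    have hsum_ind : ∀ (n : Fin N) (g : ((r : Fin R) × Fin (M r)) → ℝ),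
        ∑ i : (r : Fin R) × Fin (M r), (if n ∈ A i.1 i.2 then (1:ℝ) else 0) * g i
          = ∑ r : Fin R, g (v r n) := by
      intro n g
      rw [← Finset.univ_sigma_univ, Finset.sum_sigma]
      have inner : ∀ r : Fin R, ∑ m : Fin (M r),
          (if n ∈ A r m then (1:ℝ) else 0) * g ⟨r, m⟩ = g (v r n) := by
        intro r
        have : ∀ m : Fin (M r), (if n ∈ A r m then (1:ℝ) else 0) * g ⟨r, m⟩
            = if m = c r n then g ⟨r, m⟩ else 0 := by
          intro m
          by_cases hm : n ∈ A r m
          · rw [if_pos hm, if_pos (hcu r n m hm), one_mul]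
          · rw [if_neg hm, if_neg, zero_mul]
            intro he; exact hm (he ▸ hc r n)
        rw [Finset.sum_congr rfl fun m _ => this m, Finset.sum_ite_eq' Finset.univ (c r n)]
        simp [hvdef]
      exact Finset.sum_congr rfl fun r _ => inner r
    have hR1 : ∀ n : Fin N,
        ∑ i : (r : Fin R) × Fin (M r), (if n ∈ A i.1 i.2 then (1:ℝ) else 0) = (R : ℝ) := by
      intro n
      have := hsum_ind n (fun _ => (1:ℝ))
      simpa using this
    -- w in terms of W
    have hwW : ∀ i j, i ≠ j → w i j = W i j := by
      intro i j hij
      rw [hw, if_neg hij, hWdef]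
      have : A i.1 i.2 ∩ A j.1 j.2 = Finset.univ.filter (fun n => n ∈ A i.1 i.2 ∧ n ∈ A j.1 j.2) := by
        ext n; simp [Finset.mem_inter]
      rw [this, Finset.card_filter]
      push_cast
      refine Finset.sum_congr rfl fun n _ => ?_
      by_cases h1 : n ∈ A i.1 i.2 <;> by_cases h2 : n ∈ A j.1 j.2 <;> simp [h1, h2]
    have hwsymm : ∀ i j, w i j = w j i := by
      intro i j
      by_cases h : i = j
      · rw [h]
      · rw [hw, hw, if_neg h, if_neg (Ne.symm h), Finset.inter_comm]
    -- master lemma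
    have hmaster : ∀ (F : ((r : Fin R) × Fin (M r)) → ((r : Fin R) × Fin (M r)) → ℝ),
        ∑ i : (r : Fin R) × Fin (M r), ∑ j : (r : Fin R) × Fin (M r), W i j * F i j
          = ∑ n : Fin N, ∑ r : Fin R, ∑ r' : Fin R, F (v r n) (v r' n) := by
      intro F
      have step1 : ∀ i, ∑ j : (r : Fin R) × Fin (M r), W i j * F i j
          = ∑ n : Fin N, (if n ∈ A i.1 i.2 then (1:ℝ) else 0) * (∑ r' : Fin R, F i (v r' n)) := by
        intro i
        rw [hWdef]
        simp only
        calc ∑ j, (∑ n, (if n ∈ A i.1 i.2 then (1:ℝ) else 0) * (if n ∈ A j.1 j.2 then (1:ℝ) else 0)) * F i j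
            = ∑ j, ∑ n, (if n ∈ A i.1 i.2 then (1:ℝ) else 0) * ((if n ∈ A j.1 j.2 then (1:ℝ) else 0) * F i j) := by
              refine Finset.sum_congr rfl fun j _ => ?_
              rw [Finset.sum_mul]
              refine Finset.sum_congr rfl fun n _ => by ring
          _ = ∑ n, (if n ∈ A i.1 i.2 then (1:ℝ) else 0) * (∑ j, (if n ∈ A j.1 j.2 then (1:ℝ) else 0) * F i j) := by
              rw [Finset.sum_comm]
              refine Finset.sum_congr rfl fun n _ => ?_
              rw [Finset.mul_sum]
          _ = ∑ n, (if n ∈ A i.1 i.2 then (1:ℝ) else 0) * (∑ r' : Fin R, F i (v r' n)) := by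
              refine Finset.sum_congr rfl fun n _ => ?_
              rw [hsum_ind n (fun j => F i j)]
      calc ∑ i, ∑ j, W i j * F i j
          = ∑ i, ∑ n, (if n ∈ A i.1 i.2 then (1:ℝ) else 0) * (∑ r' : Fin R, F i (v r' n)) :=
            Finset.sum_congr rfl fun i _ => step1 i
        _ = ∑ n, ∑ i, (if n ∈ A i.1 i.2 then (1:ℝ) else 0) * (∑ r' : Fin R, F i (v r' n)) :=
            Finset.sum_comm
        _ = ∑ n, ∑ r : Fin R, ∑ r' : Fin R, F (v r n) (v r' n) :=
            Finset.sum_congr rfl fun n _ => hsum_ind n (fun i => ∑ r' : Fin R, F i (v r' n))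
    classical
    have hcard : ∀ i : (r : Fin R) × Fin (M r),
        ((A i.1 i.2).card : ℝ) = ∑ n : Fin N, (if n ∈ A i.1 i.2 then (1:ℝ) else 0) := by
      intro i
      rw [Finset.sum_ite_mem, Finset.univ_inter, Finset.sum_const, nsmul_eq_mul, mul_one]
    have hind_sum : ∀ n : Fin N,
        ∑ j : (r : Fin R) × Fin (M r), (if n ∈ A j.1 j.2 then (1:ℝ) else 0) = (R : ℝ) := hR1
    have hWsum : ∀ i, ∑ j, W i j = (R : ℝ) * ((A i.1 i.2).card : ℝ) := by
      intro i
      calc ∑ j, W i j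
          = ∑ j : (r : Fin R) × Fin (M r), ∑ n : Fin N,
              (if n ∈ A i.1 i.2 then (1:ℝ) else 0) * (if n ∈ A j.1 j.2 then (1:ℝ) else 0) := by
            rw [hWdef]
        _ = ∑ n : Fin N, ∑ j : (r : Fin R) × Fin (M r),
              (if n ∈ A i.1 i.2 then (1:ℝ) else 0) * (if n ∈ A j.1 j.2 then (1:ℝ) else 0) :=
            Finset.sum_comm
        _ = ∑ n : Fin N, (if n ∈ A i.1 i.2 then (1:ℝ) else 0) * (R : ℝ) := by
            refine Finset.sum_congr rfl fun n _ => ?_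
            rw [← Finset.mul_sum, hR1 n]
        _ = (R : ℝ) * ((A i.1 i.2).card : ℝ) := by
            rw [← Finset.sum_mul, ← hcard i]; ring
    have hWii : ∀ i, W i i = ((A i.1 i.2).card : ℝ) := by
      intro i
      rw [hWdef, hcard i]
      simp only
      refine Finset.sum_congr rfl fun n _ => ?_
      by_cases h : n ∈ A i.1 i.2 <;> simp [h]
    have hδcard : ∀ i, δ i = ((R:ℝ) - 1) * ((A i.1 i.2).card : ℝ) := by
      intro i
      have hsplit : ∀ j, w i j = W i j - (if j = i then W i i else 0) := by
        intro j
        by_cases h : j = i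
        · subst h; rw [if_pos rfl, hw, if_pos rfl]; ring
        · rw [if_neg h, hwW i j (fun he => h he.symm), sub_zero]
      rw [hδ, Finset.sum_congr rfl fun j _ => hsplit j, Finset.sum_sub_distrib,
        Finset.sum_ite_eq' Finset.univ i (fun _ => W i i), if_pos (Finset.mem_univ i),
        hWsum i, hWii i]
      ring
    have hRpos : (1:ℝ) ≤ (R:ℝ) - 1 := by
      have : (2:ℝ) ≤ (R:ℝ) := by exact_mod_cast hR
      linarith
    have hδpos : ∀ i, 0 < δ i := by
      intro i
      rw [hδcard i]
      have h1 : 0 < ((A i.1 i.2).card : ℝ) := by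
        have := Finset.card_pos.mpr (hAne i.1 i.2)
        exact_mod_cast this
      nlinarith
    have hQsum : ∀ g : ((r : Fin R) × Fin (M r)) → ℝ,
        ∑ i, δ i * g i = ((R:ℝ) - 1) * ∑ n : Fin N, ∑ r : Fin R, g (v r n) := by
      intro g
      calc ∑ i, δ i * g i
          = ∑ i, ((R:ℝ)-1) * ((∑ n : Fin N, (if n ∈ A i.1 i.2 then (1:ℝ) else 0)) * g i) := by
            refine Finset.sum_congr rfl fun i _ => ?_
            rw [hδcard i, hcard i]; ring
        _ = ((R:ℝ)-1) * ∑ i, (∑ n : Fin N, (if n ∈ A i.1 i.2 then (1:ℝ) else 0)) * g i := by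
            rw [Finset.mul_sum]
        _ = ((R:ℝ)-1) * ∑ i, ∑ n : Fin N, (if n ∈ A i.1 i.2 then (1:ℝ) else 0) * g i := by
            congr 1
            exact Finset.sum_congr rfl fun i _ => Finset.sum_mul _ _ _
        _ = ((R:ℝ)-1) * ∑ n : Fin N, ∑ i, (if n ∈ A i.1 i.2 then (1:ℝ) else 0) * g i := by
            congr 1
            exact Finset.sum_comm
        _ = ((R:ℝ)-1) * ∑ n : Fin N, ∑ r : Fin R, g (v r n) := by
            congr 1
            exact Finset.sum_congr rfl fun n _ => hsum_ind n g
    have hvoluniv : vol Finset.univ = ((R:ℝ) - 1) * ((N:ℝ) * (R:ℝ)) := by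
      rw [hvol]
      have := hQsum (fun _ => (1:ℝ))
      simp only [mul_one] at this
      rw [this]
      simp [Finset.card_univ, mul_comm]
    have hsel : ∀ (T : Finset ((r : Fin R) × Fin (M r))) (f : ((r : Fin R) × Fin (M r)) → ℝ),
        ∑ i : (r : Fin R) × Fin (M r), (if i ∈ T then (1:ℝ) else 0) * f i = ∑ i ∈ T, f i := by
      intro T f
      rw [Finset.sum_congr rfl (fun i _ => by rw [ite_mul, one_mul, zero_mul]),
        Finset.sum_ite_mem, Finset.univ_inter]
    have hcutform : ∀ U : Finset ((r : Fin R) × Fin (M r)),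
        cut U = ∑ n : Fin N, (∑ r : Fin R, (if v r n ∈ U then (1:ℝ) else 0)) *
          ((R:ℝ) - ∑ r : Fin R, (if v r n ∈ U then (1:ℝ) else 0)) := by
      intro U
      have h1 : cut U = ∑ i, ∑ j, W i j *
          ((if i ∈ U then (1:ℝ) else 0) * (if j ∈ Uᶜ then (1:ℝ) else 0)) := by
        rw [hcut, ← hsel U (fun i => ∑ j ∈ Uᶜ, w i j)]
        refine Finset.sum_congr rfl fun i _ => ?_
        rw [← hsel Uᶜ (fun j => w i j), Finset.mul_sum]
        refine Finset.sum_congr rfl fun j _ => ?_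
        by_cases hij : i = j
        · subst hij
          by_cases hU : i ∈ U
          · have : i ∉ Uᶜ := by simp [hU]
            simp [this]
          · simp [hU]
        · rw [hwW i j hij]; ring
      rw [h1, hmaster (fun i j => (if i ∈ U then (1:ℝ) else 0) * (if j ∈ Uᶜ then (1:ℝ) else 0))]
      refine Finset.sum_congr rfl fun n _ => ?_
      rw [← Finset.sum_mul_sum]
      congr 1
      calc ∑ r' : Fin R, (if v r' n ∈ Uᶜ then (1:ℝ) else 0)
          = ∑ r' : Fin R, ((1:ℝ) - (if v r' n ∈ U then (1:ℝ) else 0)) := by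
            refine Finset.sum_congr rfl fun r' _ => ?_
            by_cases h : v r' n ∈ U <;> simp [h, Finset.mem_compl]
        _ = (R:ℝ) - ∑ r : Fin R, (if v r n ∈ U then (1:ℝ) else 0) := by
            rw [Finset.sum_sub_distrib, Finset.sum_const]
            simp [Finset.card_univ]
    -- the auxiliary graph on elements
    set H : SimpleGraph (Fin N) :=
      { Adj := fun n n' => n ≠ n' ∧ ∃ i : ((r : Fin R) × Fin (M r)),
          n ∈ A i.1 i.2 ∧ n' ∈ A i.1 i.2,
        symm := by constructor; rintro a b ⟨hne, i, h1, h2⟩; exact ⟨hne.symm, i, h2, h1⟩,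
        loopless := by constructor; rintro a ⟨hne, -⟩; exact hne rfl } with hHdef
    have hH : ∀ n n', H.Adj n n' ↔ (n ≠ n' ∧ ∃ i : ((r : Fin R) × Fin (M r)),
        n ∈ A i.1 i.2 ∧ n' ∈ A i.1 i.2) := fun n n' => Iff.rfl
    have hHpre : ∀ n₀ n₁ : Fin N, H.Reachable n₀ n₁ := by
      intro n₀ n₁
      by_contra hreach
      have hR0 : 0 < R := by omega
      set r₀ : Fin R := ⟨0, hR0⟩ with hr₀
      set U : Finset ((r : Fin R) × Fin (M r)) :=
        Finset.univ.filter (fun i => ∃ n : Fin N, H.Reachable n₀ n ∧ n ∈ A i.1 i.2) with hUdef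
      -- any element of a cell of a member of U is reachable
      have hkey : ∀ i : ((r : Fin R) × Fin (M r)), i ∈ U → ∀ n : Fin N, n ∈ A i.1 i.2 →
          H.Reachable n₀ n := by
        intro i hi n hn
        rw [hUdef, Finset.mem_filter] at hi
        obtain ⟨-, n', hn', hn'mem⟩ := hi
        by_cases he : n' = n
        · exact he ▸ hn'
        · exact hn'.trans (SimpleGraph.Adj.reachable ((hH n' n).mpr ⟨he, i, hn'mem, hn⟩))
      have hUne : U.Nonempty := by
        refine ⟨⟨r₀, c r₀ n₀⟩, ?_⟩
        rw [hUdef, Finset.mem_filter]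
        exact ⟨Finset.mem_univ _, n₀, SimpleGraph.Reachable.refl n₀, hc r₀ n₀⟩
      have hUuniv : U ≠ Finset.univ := by
        intro h
        have h1 : (⟨r₀, c r₀ n₁⟩ : (r : Fin R) × Fin (M r)) ∈ U := h ▸ Finset.mem_univ _
        exact hreach (hkey _ h1 n₁ (hc r₀ n₁))
      have hcut0 : cut U = 0 := by
        rw [hcut]
        refine Finset.sum_eq_zero fun i hi => Finset.sum_eq_zero fun j hj => ?_
        rw [hw]
        by_cases hij : i = j
        · rw [if_pos hij]
        · rw [if_neg hij]
          norm_cast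
          rw [Finset.card_eq_zero, Finset.eq_empty_iff_forall_notMem]
          intro n hn
          rw [Finset.mem_inter] at hn
          have hreach_n : H.Reachable n₀ n := hkey i hi n hn.1
          have hjU : j ∈ U := by
            rw [hUdef, Finset.mem_filter]
            exact ⟨Finset.mem_univ _, n, hreach_n, hn.2⟩
          rw [Finset.mem_compl] at hj
          exact hj hjU
      have := hconn U hUne hUuniv
      rw [hcut0] at this
      exact lt_irrefl 0 this
    constructor
    · -- Cheeger constant bound
      have hM1 : ∀ r, 0 < M r := fun r => (c r ⟨0, hN⟩).pos
      have hcardV : 2 ≤ Fintype.card ((r : Fin R) × Fin (M r)) := by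
        rw [Fintype.card_sigma]
        calc 2 ≤ R := hR
          _ = ∑ _r : Fin R, 1 := by simp
          _ ≤ ∑ r : Fin R, Fintype.card (Fin (M r)) := by
              refine Finset.sum_le_sum fun r _ => ?_
              simp only [Fintype.card_fin]
              exact hM1 r
      have hsing_ne : ({v₀} : Finset ((r : Fin R) × Fin (M r))) ≠ Finset.univ := by
        intro h
        have h1 : ({v₀} : Finset ((r : Fin R) × Fin (M r))).card = 1 := Finset.card_singleton v₀
        rw [h, Finset.card_univ] at h1
        omega
      rw [hhG]
      apply le_csInf
      · exact ⟨_, ⟨{v₀}, Finset.singleton_nonempty v₀, hsing_ne, rfl⟩⟩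
      · rintro t ⟨U, hUne, hUuniv, rfl⟩
        have hvolU : 0 < vol U := by
          rw [hvol]; exact Finset.sum_pos (fun i _ => hδpos i) hUne
        have hvolUc : 0 < vol Uᶜ := by
          rw [hvol]
          refine Finset.sum_pos (fun i _ => hδpos i) ?_
          refine Finset.nonempty_iff_ne_empty.mpr fun he => hUuniv ?_
          rwa [Finset.compl_eq_empty_iff] at he
        have hmin : 0 < min (vol U) (vol Uᶜ) := lt_min hvolU hvolUc
        have hsum : vol U + vol Uᶜ = ((R:ℝ) - 1) * ((N:ℝ) * (R:ℝ)) := by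
          rw [hvol, hvol, Finset.sum_add_sum_compl, ← hvol, hvoluniv]
        set s : Fin N → ℝ := fun n => ∑ r : Fin R, (if v r n ∈ U then (1:ℝ) else 0) with hsdef
        have hs_nonneg : ∀ n, 0 ≤ s n := by
          intro n; apply Finset.sum_nonneg; intro r _; positivity
        have hs_le : ∀ n, s n ≤ (R:ℝ) := by
          intro n
          calc s n ≤ ∑ _r : Fin R, (1:ℝ) := by
                refine Finset.sum_le_sum fun r _ => ?_
                by_cases h : v r n ∈ U <;> simp [h]
            _ = (R:ℝ) := by simp
        have hterm_nonneg : ∀ n, 0 ≤ s n * ((R:ℝ) - s n) := fun n =>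
          mul_nonneg (hs_nonneg n) (by linarith [hs_le n])
        have hcutpos := hconn U hUne hUuniv
        obtain ⟨n₁, hn₁⟩ : ∃ n, 0 < s n * ((R:ℝ) - s n) := by
          by_contra h
          push_neg at h
          have : cut U ≤ 0 := by
            rw [hcutform U]
            exact Finset.sum_nonpos fun n _ => h n
          linarith
        -- integrality of s n₁
        have hsnat : s n₁ = ((Finset.univ.filter (fun r : Fin R => v r n₁ ∈ U)).card : ℝ) := by
          rw [hsdef]
          simp [Finset.sum_boole]
        set k := (Finset.univ.filter (fun r : Fin R => v r n₁ ∈ U)).card with hkdef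
        have hk0 : 0 < k := by
          rcases Nat.eq_zero_or_pos k with h | h
          · rw [hsnat, h] at hn₁; norm_num at hn₁
          · exact h
        have hkR : k < R := by
          by_contra h
          push_neg at h
          have : (R:ℝ) ≤ s n₁ := by rw [hsnat]; exact_mod_cast h
          nlinarith
        have hs1 : 1 ≤ s n₁ := by rw [hsnat]; exact_mod_cast hk0
        have hs2 : s n₁ ≤ (R:ℝ) - 1 := by
          rw [hsnat]
          have : (k:ℝ) ≤ (R:ℝ) - 1 := by
            have : k ≤ R - 1 := by omega
            have h2 : ((k:ℝ)) ≤ ((R-1 : ℕ) : ℝ) := by exact_mod_cast this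
            rwa [Nat.cast_sub (by omega), Nat.cast_one] at h2
          exact this
        have hcutge : (R:ℝ) - 1 ≤ cut U := by
          calc (R:ℝ) - 1 ≤ s n₁ * ((R:ℝ) - s n₁) := by nlinarith
            _ ≤ ∑ n : Fin N, s n * ((R:ℝ) - s n) :=
                Finset.single_le_sum (fun n _ => hterm_nonneg n) (Finset.mem_univ n₁)
            _ = cut U := (hcutform U).symm
        have hminle : min (vol U) (vol Uᶜ) ≤ ((R:ℝ)-1) * ((N:ℝ) * (R:ℝ)) / 2 := by
          rcases le_total (vol U) (vol Uᶜ) with h | h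
          · rw [min_eq_left h]; linarith
          · rw [min_eq_right h]; linarith
        have hNR : 0 < (N:ℝ) * (R:ℝ) := by
          have h1 : (1:ℝ) ≤ (N:ℝ) := by exact_mod_cast hN
          have h2 : (2:ℝ) ≤ (R:ℝ) := by exact_mod_cast hR
          nlinarith
        rw [div_le_div_iff₀ hNR hmin]
        have h3 : cut U * ((N:ℝ)*(R:ℝ)) ≥ ((R:ℝ)-1) * ((N:ℝ)*(R:ℝ)) :=
          mul_le_mul_of_nonneg_right hcutge (le_of_lt hNR)
        linarith
    · -- eigenvalue bound
      intro lam x hx heig hlam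
      have hx' : ∀ i, ∑ j, L i j * x j = lam * x i := by
        intro i
        have := congrFun heig i
        simpa [Matrix.mulVec, dotProduct] using this
      set s : ((r : Fin R) × Fin (M r)) → ℝ := fun i => Real.sqrt (δ i) with hsdef
      have hsi : ∀ i, s i = Real.sqrt (δ i) := fun i => by rw [hsdef]
      have hspos : ∀ i, 0 < s i := fun i => by rw [hsi]; exact Real.sqrt_pos.mpr (hδpos i)
      have hsne : ∀ i, s i ≠ 0 := fun i => (hspos i).ne'
      have hss : ∀ i, s i * s i = δ i := fun i => by rw [hsi]; exact Real.mul_self_sqrt (hδpos i).le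
      set y : ((r : Fin R) × Fin (M r)) → ℝ := fun i => x i / s i with hydef
      have hyi : ∀ i, y i = x i / s i := fun i => by rw [hydef]
      have hxy : ∀ i, x i = s i * y i := by
        intro i; rw [hyi i, ← mul_div_assoc]
        exact (mul_div_cancel_left₀ (x i) (hsne i)).symm
      have hK : ∀ i j, s i * L i j * s j = (if i = j then δ i else -(w i j)) := by
        intro i j
        have hsqrt : Real.sqrt (δ i * δ j) = s i * s j := by
          rw [hsi, hsi]; exact Real.sqrt_mul (hδpos i).le (δ j)
        rw [hL i j, hsqrt]
        have hgen : ∀ K : ℝ, s i * (K / (s i * s j)) * s j = K := by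
          intro K
          have h2 : s i * (K / (s i * s j)) * s j = K * ((s i * s j) / (s i * s j)) := by ring
          rw [h2, div_self (mul_ne_zero (hsne i) (hsne j)), mul_one]
        exact hgen _
      have hKsplit : ∀ i j, (if i = j then δ i else -(w i j))
          = (if i = j then δ i + w i j else 0) - w i j := by
        intro i j
        by_cases h : i = j
        · subst h; simp
        · simp [h]
      have hwdiag : ∀ i, w i i = 0 := fun i => by rw [hw, if_pos rfl]
      have hcolsum : ∀ j, ∑ i, w i j = δ j := by
        intro j
        rw [Finset.sum_congr rfl fun i _ => hwsymm i j, ← hδ]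
      have hKsum : ∀ j, ∑ i, (if i = j then δ i else -(w i j)) = 0 := by
        intro j
        rw [Finset.sum_congr rfl fun i _ => hKsplit i j, Finset.sum_sub_distrib,
          Finset.sum_ite_eq' Finset.univ j (fun i => δ i + w i j), if_pos (Finset.mem_univ j),
          hwdiag j, hcolsum j]
        ring
      -- orthogonality
      have horthsx : ∑ i, s i * x i = 0 := by
        have hcalc : lam * (∑ i, s i * x i) = 0 := by
          calc lam * (∑ i, s i * x i) = ∑ i, s i * (lam * x i) := by
                rw [Finset.mul_sum]; exact Finset.sum_congr rfl fun i _ => by ring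
            _ = ∑ i, s i * (∑ j, L i j * x j) := by
                exact Finset.sum_congr rfl fun i _ => by rw [hx' i]
            _ = ∑ i, ∑ j, (s i * L i j * s j) * y j := by
                refine Finset.sum_congr rfl fun i _ => ?_
                rw [Finset.mul_sum]
                refine Finset.sum_congr rfl fun j _ => ?_
                rw [hxy j]; ring
            _ = ∑ j, (∑ i, (if i = j then δ i else -(w i j))) * y j := by
                rw [Finset.sum_comm]
                refine Finset.sum_congr rfl fun j _ => ?_
                rw [Finset.sum_mul]
                exact Finset.sum_congr rfl fun i _ => by rw [hK i j]
            _ = 0 := by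
                refine Finset.sum_eq_zero fun j _ => ?_
                rw [hKsum j, zero_mul]
        rcases mul_eq_zero.mp hcalc with h | h
        · exact absurd h hlam
        · exact h
      have horth : ∑ i, δ i * y i = 0 := by
        rw [← horthsx]
        refine Finset.sum_congr rfl fun i _ => ?_
        rw [hxy i, ← hss i]; ring
      -- Rayleigh
      have hray : lam * (∑ i, x i ^ 2)
          = (∑ i, δ i * y i ^2) - ∑ i, ∑ j, w i j * (y i * y j) := by
        calc lam * (∑ i, x i ^ 2) = ∑ i, x i * (lam * x i) := by
              rw [Finset.mul_sum]; exact Finset.sum_congr rfl fun i _ => by ring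
          _ = ∑ i, x i * (∑ j, L i j * x j) := Finset.sum_congr rfl fun i _ => by rw [hx' i]
          _ = ∑ i, ∑ j, (s i * L i j * s j) * (y i * y j) := by
              refine Finset.sum_congr rfl fun i _ => ?_
              rw [Finset.mul_sum]
              refine Finset.sum_congr rfl fun j _ => ?_
              rw [hxy j, hxy i]; ring
          _ = ∑ i, ∑ j, ((if i = j then δ i + w i j else 0) - w i j) * (y i * y j) := by
              refine Finset.sum_congr rfl fun i _ => Finset.sum_congr rfl fun j _ => ?_
              rw [hK i j, hKsplit i j]
          _ = ∑ i, ((δ i * y i ^ 2) - ∑ j, w i j * (y i * y j)) := by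
              refine Finset.sum_congr rfl fun i _ => ?_
              rw [Finset.sum_congr rfl fun j (_ : j ∈ Finset.univ) => sub_mul _ _ _,
                Finset.sum_sub_distrib]
              congr 1
              have : ∀ j, (if i = j then δ i + w i j else 0) * (y i * y j)
                  = (if i = j then (δ i + w i j) * (y i * y j) else 0) := by
                intro j; by_cases h : i = j <;> simp [h]
              rw [Finset.sum_congr rfl fun j _ => this j, Finset.sum_ite_eq Finset.univ i,
                if_pos (Finset.mem_univ i), hwdiag i]
              ring
          _ = (∑ i, δ i * y i ^2) - ∑ i, ∑ j, w i j * (y i * y j) := by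
              rw [Finset.sum_sub_distrib]
      have hrowsum : ∀ i, ∑ j, w i j * y i ^ 2 = δ i * y i ^ 2 := by
        intro i
        rw [← Finset.sum_mul, ← hδ i]
      have hEsplit : ∑ i, ∑ j, w i j * (y i - y j)^2
          = 2*(∑ i, δ i * y i^2) - 2*(∑ i, ∑ j, w i j * (y i * y j)) := by
        have hpt : ∀ i j, w i j * (y i - y j)^2
            = w i j * y i ^2 + w i j * y j ^2 - 2 * (w i j * (y i * y j)) := by
          intro i j; ring
        calc ∑ i, ∑ j, w i j * (y i - y j)^2
            = ∑ i, (∑ j, w i j * y i ^2 + ∑ j, w i j * y j ^2 - 2 * ∑ j, w i j * (y i * y j)) := by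
              refine Finset.sum_congr rfl fun i _ => ?_
              rw [Finset.sum_congr rfl fun j _ => hpt i j]
              rw [Finset.sum_sub_distrib, Finset.sum_add_distrib, Finset.mul_sum]
          _ = (∑ i, ∑ j, w i j * y i ^2) + (∑ i, ∑ j, w i j * y j ^2)
                - 2 * ∑ i, ∑ j, w i j * (y i * y j) := by
              rw [Finset.sum_sub_distrib, Finset.sum_add_distrib, Finset.mul_sum]
          _ = 2*(∑ i, δ i * y i^2) - 2*(∑ i, ∑ j, w i j * (y i * y j)) := by
              have h1 : ∑ i, ∑ j, w i j * y i ^2 = ∑ i, δ i * y i ^2 :=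
                Finset.sum_congr rfl fun i _ => hrowsum i
              have h2 : ∑ i, ∑ j, w i j * y j ^2 = ∑ i, δ i * y i ^2 := by
                rw [Finset.sum_comm]
                refine Finset.sum_congr rfl fun j _ => ?_
                rw [← Finset.sum_mul, hcolsum j]
              rw [h1, h2]; ring
  
      set Q : ℝ := ∑ i, x i ^ 2 with hQdef
      have hQy : Q = ∑ i, δ i * y i ^ 2 := by
        rw [hQdef]
        refine Finset.sum_congr rfl fun i _ => ?_
        rw [hxy i, ← hss i]; ring
      have hQpos : 0 < Q := by
        obtain ⟨i, hi⟩ : ∃ i, x i ≠ 0 := by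
          by_contra h; push_neg at h; exact hx (funext h)
        have h1 : 0 < x i ^ 2 := by positivity
        have h2 : x i ^ 2 ≤ ∑ j, x j ^ 2 :=
          Finset.single_le_sum (fun j _ => sq_nonneg (x j)) (Finset.mem_univ i)
        rw [hQdef]; linarith
      set E : ℝ := ∑ i, ∑ j, w i j * (y i - y j)^2 with hEdef
      have hlamQE : lam * Q = E / 2 := by
        rw [hQdef, hEdef]
        rw [hQdef] at hQy
        linarith [hray, hEsplit, hQy]
      set u : Fin N → Fin R → ℝ := fun n r => y (v r n) with hudef
      have hui : ∀ n r, u n r = y (v r n) := fun n r => by rw [hudef]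
      set B : Fin N → ℝ := fun n => ∑ r : Fin R, ∑ r' : Fin R, (u n r - u n r')^2 with hBdef
      have hBi : ∀ n, B n = ∑ r : Fin R, ∑ r' : Fin R, (u n r - u n r')^2 := fun n => by rw [hBdef]
      have hBnonneg : ∀ n, 0 ≤ B n := fun n => by rw [hBi]; positivity
      have hEz : E = ∑ n : Fin N, B n := by
        rw [hEdef]
        have hstep : ∀ i j, w i j * (y i - y j)^2 = W i j * (y i - y j)^2 := by
          intro i j
          by_cases h : i = j
          · subst h; simp
          · rw [hwW i j h]
        rw [Finset.sum_congr rfl fun i _ => Finset.sum_congr rfl fun j _ => hstep i j,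
          hmaster (fun i j => (y i - y j)^2)]
      have hE0 : 0 ≤ E := by
        rw [hEz]; exact Finset.sum_nonneg fun n _ => hBnonneg n
      set Z2 : ℝ := ∑ n : Fin N, ∑ r : Fin R, (u n r)^2 with hZ2def
      have hQz : Q = ((R:ℝ) - 1) * Z2 := by
        rw [hQy, hQsum (fun i => y i ^ 2), hZ2def]
      have hRr : (2:ℝ) ≤ (R:ℝ) := by exact_mod_cast hR
      have hNr : (1:ℝ) ≤ (N:ℝ) := by exact_mod_cast hN
      have hsum0 : ∑ n : Fin N, ∑ r : Fin R, u n r = 0 := by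
        have h1 := hQsum (fun i => y i)
        have h2 : ∑ i, δ i * y i = 0 := horth
        rw [h2] at h1
        have h3 : ∑ n : Fin N, ∑ r : Fin R, y (v r n) = ∑ n : Fin N, ∑ r : Fin R, u n r :=
          Finset.sum_congr rfl fun n _ => Finset.sum_congr rfl fun r _ => (hui n r).symm
        rw [h3] at h1
        rcases mul_eq_zero.mp h1.symm with h | h
        · exfalso; linarith
        · exact h
      have hadj : ∀ {a b : Fin N}, H.Adj a b → ∃ r₀, u a r₀ = u b r₀ := by
        intro a b hab
        obtain ⟨hne, i, ha, hb⟩ := (hH a b).mp hab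
        refine ⟨i.1, ?_⟩
        rw [hui, hui, hvdef]
        have h1 : c i.1 a = c i.1 b := by
          rw [← hcu i.1 a i.2 ha, ← hcu i.1 b i.2 hb]
        simp only [h1]
      have hNE2 : ∀ p q : Fin N × Fin R, 2 * (u p.1 p.2 - u q.1 q.2)^2 ≤ (N:ℝ) * E := by
        intro p q
        obtain ⟨Wk⟩ := hHpre p.1 q.1
        set P := Wk.toPath with hPdef
        have hb := stmt6_walk_bound H u hadj P.1 P.2 p.2 q.2
        have hsupnodup : P.1.support.Nodup := P.2.support_nodup
        have hlen : ((P.1.length : ℝ) + 1) ≤ (N:ℝ) := by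
          have h1 : P.1.support.length = P.1.length + 1 := SimpleGraph.Walk.length_support P.1
          have h2 : P.1.support.length ≤ N := by
            have := List.Nodup.length_le_card hsupnodup
            simpa using this
          have h3 : P.1.length + 1 ≤ N := h1 ▸ h2
          exact_mod_cast h3
        have hfun : (fun n => ∑ s : Fin R, ∑ t : Fin R, (u n s - u n t)^2) = B := by
          funext n; rw [hBi]
        have hmapnn : 0 ≤ (P.1.support.map (fun n => ∑ s : Fin R, ∑ t : Fin R, (u n s - u n t)^2)).sum := by
          apply List.sum_nonneg
          intro a hx2
          simp only [List.mem_map] at hx2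
          obtain ⟨n, _, rfl⟩ := hx2
          positivity
        have hmap : (P.1.support.map (fun n => ∑ s : Fin R, ∑ t : Fin R, (u n s - u n t)^2)).sum ≤ E := by
          rw [hEz, hfun, ← List.sum_toFinset _ hsupnodup]
          exact Finset.sum_le_sum_of_subset_of_nonneg (Finset.subset_univ _) (fun n _ _ => hBnonneg n)
        calc 2 * (u p.1 p.2 - u q.1 q.2)^2
            ≤ ((P.1.length : ℝ) + 1) *
              (P.1.support.map (fun n => ∑ s : Fin R, ∑ t : Fin R, (u n s - u n t)^2)).sum := by
              exact_mod_cast hb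
          _ ≤ (N:ℝ) * E := mul_le_mul hlen hmap hmapnn (by linarith)
      have hpairs := stmt6_sq_pairs_sum (f := fun p : Fin N × Fin R => u p.1 p.2)
      have hcardNR : (Fintype.card (Fin N × Fin R) : ℝ) = (N:ℝ) * R := by
        simp [Fintype.card_prod]
      have hf2 : ∑ p : Fin N × Fin R, (u p.1 p.2)^2 = Z2 := by
        rw [hZ2def, Fintype.sum_prod_type]
      have hf0 : ∑ p : Fin N × Fin R, u p.1 p.2 = 0 := by
        rw [Fintype.sum_prod_type]; exact hsum0
      rw [hcardNR, hf2, hf0] at hpairs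
      have hsumle : ∑ p : Fin N × Fin R, ∑ q : Fin N × Fin R, (u p.1 p.2 - u q.1 q.2)^2
          ≤ ((N:ℝ)*R) * (((N:ℝ)*R) * ((N:ℝ) * E / 2)) := by
        calc ∑ p : Fin N × Fin R, ∑ q : Fin N × Fin R, (u p.1 p.2 - u q.1 q.2)^2
            ≤ ∑ _p : Fin N × Fin R, ∑ _q : Fin N × Fin R, ((N:ℝ) * E / 2) := by
              refine Finset.sum_le_sum fun p _ => Finset.sum_le_sum fun q _ => ?_
              linarith [hNE2 p q]
          _ = ((N:ℝ)*R) * (((N:ℝ)*R) * ((N:ℝ) * E / 2)) := by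
              rw [Finset.sum_const, Finset.sum_const]
              simp only [nsmul_eq_mul, Finset.card_univ, Fintype.card_prod, Fintype.card_fin]
              push_cast
              ring
      have hNRpos : (0:ℝ) < (N:ℝ)*R := by nlinarith
      have hZ2sum : 2 * ((N:ℝ)*R) * Z2 ≤ ((N:ℝ)*R) * (((N:ℝ)*R) * ((N:ℝ) * E / 2)) := by
        calc 2 * ((N:ℝ)*R) * Z2 = 2 * ((N:ℝ)*R) * Z2 - 2 * (0:ℝ)^2 := by ring
          _ = ∑ p : Fin N × Fin R, ∑ q : Fin N × Fin R,
                ((fun p : Fin N × Fin R => u p.1 p.2) p - (fun p : Fin N × Fin R => u p.1 p.2) q)^2 :=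
              hpairs.symm
          _ = ∑ p : Fin N × Fin R, ∑ q : Fin N × Fin R, (u p.1 p.2 - u q.1 q.2)^2 := rfl
          _ ≤ ((N:ℝ)*R) * (((N:ℝ)*R) * ((N:ℝ) * E / 2)) := hsumle
      clear_value s y u B Q E Z2
      have hZ2le : Z2 ≤ (N:ℝ)^2 * R * E / 4 := by
        have h2 : 2*((N:ℝ)*R)*Z2 ≤ 2*((N:ℝ)*R)*((N:ℝ)^2*R*E/4) := by
          calc 2*((N:ℝ)*R)*Z2 ≤ ((N:ℝ)*R) * (((N:ℝ)*R) * ((N:ℝ) * E / 2)) := hZ2sum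
            _ = 2*((N:ℝ)*R)*((N:ℝ)^2*R*E/4) := by ring
        have h3 : (0:ℝ) < 2*((N:ℝ)*R) := by nlinarith
        exact le_of_mul_le_mul_left h2 h3
      have hQle : 4 * Q ≤ (N:ℝ)^2 * R^2 * E := by
        rw [hQz]
        have h1 : ((R:ℝ)-1) * Z2 ≤ ((R:ℝ)-1) * ((N:ℝ)^2*R*E/4) :=
          mul_le_mul_of_nonneg_left hZ2le (by linarith)
        have h2 : 0 ≤ (N:ℝ)^2 * R * E :=
          mul_nonneg (mul_nonneg (sq_nonneg _) (by linarith)) hE0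
        nlinarith [h1, h2]
      have hden : 0 < (N:ℝ)^2 * R^2 := by nlinarith
      have hE2 : E = 2*lam*Q := by linarith [hlamQE]
      rw [hE2] at hQle
      have hfin : 2 ≤ (N:ℝ)^2*R^2*lam := by
        have h2Q : 2*Q ≤ ((N:ℝ)^2*R^2*lam)*Q := by nlinarith [hQle]
        exact le_of_mul_le_mul_right (by linarith) hQpos
      rw [div_le_iff₀ hden]
      linarith
end
end

section
/- Let F₁, …, F_R (R ≥ 2) be submodular functions on a ground set V of N elements with F_r(∅) = 0, and let 𝒜 and ℬ be the associated subspace and product of base polytopes in ℝ^{NR}. Then for any x, y ∈ ℝ^{NR} for which the faces 𝒜_x and ℬ_y are nonempty, c_F(aff₀(𝒜_x), aff₀(ℬ_y))² ≤ 1 − (R−1)/R · 2/(N²R²) ≤ 1 − 1/(N²R²). -/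
set_option maxHeartbeats 1000000


open scoped RealInnerProductSpace
open Finset

noncomputable section

/-- A submodular set function on `Fin N` with `F ∅ = 0`. -/
def IsSubmodular {N : ℕ} (F : Finset (Fin N) → ℝ) : Prop :=
  F ∅ = 0 ∧ ∀ A B : Finset (Fin N), F (A ∪ B) + F (A ∩ B) ≤ F A + F B

/-- The base polytope of a set function. -/
def basePolytope {N : ℕ} (F : Finset (Fin N) → ℝ) :
    Set (EuclideanSpace ℝ (Fin N)) :=
  {s | (∀ A : Finset (Fin N), ∑ n ∈ A, s n ≤ F A) ∧ ∑ n, s n = F univ}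

/-- The subspace 𝒜 = {(a₁, …, a_R) : Σ_r a_r = 0} of ℝ^{NR}. -/
def calA (N R : ℕ) : Set (EuclideanSpace ℝ (Fin R × Fin N)) :=
  {a | ∀ n : Fin N, ∑ r : Fin R, a (r, n) = 0}

/-- The product ℬ = B(F₁) × ⋯ × B(F_R) of base polytopes in ℝ^{NR}. -/
def calB {N R : ℕ} (F : Fin R → Finset (Fin N) → ℝ) :
    Set (EuclideanSpace ℝ (Fin R × Fin N)) :=
  {b | ∀ r : Fin R, WithLp.toLp 2 (fun n => b (r, n)) ∈ basePolytope (F r)}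

/-- The face of `P` in direction `x`: the set of maximizers of `⟪x, ·⟫` over `P`. -/
def face {H : Type*} [NormedAddCommGroup H] [InnerProductSpace ℝ H]
    (P : Set H) (x : H) : Set H :=
  {p ∈ P | ∀ q ∈ P, ⟪x, q⟫ ≤ ⟪x, p⟫}

/-- `aff₀ C`: the affine hull of `C` translated to contain the origin,
as a linear subspace. -/
def aff0 {H : Type*} [NormedAddCommGroup H] [InnerProductSpace ℝ H]
    (C : Set H) : Submodule ℝ H :=
  (affineSpan ℝ C).direction

/-- The cosine of the Friedrichs angle between two subspaces. -/
def friedrichs {H : Type*} [NormedAddCommGroup H] [InnerProductSpace ℝ H]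
    (U V : Submodule ℝ H) : ℝ :=
  sSup {t | ∃ u ∈ U ⊓ (U ⊓ V)ᗮ, ∃ v ∈ V ⊓ (U ⊓ V)ᗮ,
    ‖u‖ ≤ 1 ∧ ‖v‖ ≤ 1 ∧ t = ⟪u, v⟫}

namespace Aux7
open scoped Classical


lemma inner_eq {ι : Type*} [Fintype ι] (u v : EuclideanSpace ℝ ι) :
    ⟪u, v⟫ = ∑ i, u i * v i := by
  simp [PiLp.inner_apply, RCLike.inner_apply]
  exact Finset.sum_congr rfl fun _ _ => mul_comm _ _

def Usub (N R : ℕ) : Submodule ℝ (EuclideanSpace ℝ (Fin R × Fin N)) where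
  carrier := calA N R
  add_mem' := by
    intro a b ha hb n
    have : ∑ r : Fin R, ((a + b) (r, n)) = (∑ r : Fin R, a (r,n)) + ∑ r : Fin R, b (r,n) := by
      rw [← Finset.sum_add_distrib]; rfl
    rw [this, ha n, hb n, add_zero]
  zero_mem' := by intro n; simp
  smul_mem' := by
    intro c a ha n
    have : ∑ r : Fin R, ((c • a) (r, n)) = c * ∑ r : Fin R, a (r,n) := by
      rw [Finset.mul_sum]; rfl
    rw [this, ha n, mul_zero]

lemma mem_Usub {N R : ℕ} (a : EuclideanSpace ℝ (Fin R × Fin N)) :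
    a ∈ Usub N R ↔ ∀ n : Fin N, ∑ r : Fin R, a (r, n) = 0 := Iff.rfl

lemma face_calA {N R : ℕ} {x : EuclideanSpace ℝ (Fin R × Fin N)}
    (hx : (face (calA N R) x).Nonempty) : face (calA N R) x = calA N R := by
  obtain ⟨p, hp, hmax⟩ := hx
  have key : ∀ a ∈ calA N R, ⟪x, a⟫ = ⟪x, p⟫ := by
    intro a ha
    have h2 : (2:ℝ) • p - a ∈ calA N R := by
      have := (Usub N R).sub_mem ((Usub N R).smul_mem 2 hp) ha
      exact this
    have := hmax _ h2
    have h3 : ⟪x, (2:ℝ) • p - a⟫ = 2 * ⟪x, p⟫ - ⟪x, a⟫ := by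
      rw [inner_sub_right, real_inner_smul_right]
    have h4 := hmax a ha
    have h5 : (⟪x,p⟫:ℝ) ≤ ⟪x,a⟫ := by rw [h3] at this; linarith
    exact le_antisymm h4 h5
  ext q
  constructor
  · exact fun hq => hq.1
  · intro hq
    exact ⟨hq, fun q' hq' => by rw [key q' hq', key q hq]⟩

lemma aff0_subspace {H : Type*} [NormedAddCommGroup H] [InnerProductSpace ℝ H]
    (S : Submodule ℝ H) : aff0 (S : Set H) = S := by
  unfold aff0
  rw [direction_affineSpan, vectorSpan_def]
  apply le_antisymm
  · apply Submodule.span_le.2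
    rintro w hw
    rw [Set.mem_vsub] at hw
    obtain ⟨p, hp, q, hq, rfl⟩ := hw
    exact S.sub_mem hp hq
  · intro w hw
    apply Submodule.subset_span
    rw [Set.mem_vsub]
    exact ⟨w, hw, 0, S.zero_mem, by simp⟩

lemma aff0_face_calA {N R : ℕ} {x : EuclideanSpace ℝ (Fin R × Fin N)}
    (hx : (face (calA N R) x).Nonempty) : aff0 (face (calA N R) x) = Usub N R := by
  rw [face_calA hx]
  exact aff0_subspace (Usub N R)


section Core

variable {N R : ℕ} (F : Fin R → Finset (Fin N) → ℝ) (y : EuclideanSpace ℝ (Fin R × Fin N))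

/-- sets tight at every point of the face -/
def tight (r : Fin R) : Set (Finset (Fin N)) :=
  {A | ∀ b ∈ face (calB F) y, ∑ n ∈ A, b (r, n) = F r A}

lemma univ_tight (r : Fin R) : univ ∈ tight F y r :=
  fun b hb => (hb.1 r).2

lemma empty_tight (hF : ∀ r, IsSubmodular (F r)) (r : Fin R) : ∅ ∈ tight F y r :=
  fun b _ => by simp [(hF r).1]

lemma union_inter_tight (hF : ∀ r, IsSubmodular (F r)) (r : Fin R) {A B : Finset (Fin N)}
    (hA : A ∈ tight F y r) (hB : B ∈ tight F y r) :
    A ∪ B ∈ tight F y r ∧ A ∩ B ∈ tight F y r := by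
  have key : ∀ b ∈ face (calB F) y,
      (∑ n ∈ A ∪ B, b (r, n) = F r (A ∪ B)) ∧ (∑ n ∈ A ∩ B, b (r, n) = F r (A ∩ B)) := by
    intro b hb
    have h1 : ∑ n ∈ A ∪ B, b (r, n) ≤ F r (A ∪ B) := (hb.1 r).1 (A ∪ B)
    have h2 : ∑ n ∈ A ∩ B, b (r, n) ≤ F r (A ∩ B) := (hb.1 r).1 (A ∩ B)
    have h3 : ∑ n ∈ A ∪ B, b (r, n) + ∑ n ∈ A ∩ B, b (r, n)
        = ∑ n ∈ A, b (r, n) + ∑ n ∈ B, b (r, n) := Finset.sum_union_inter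
    have h4 := (hF r).2 A B
    have h5 := hA b hb
    have h6 := hB b hb
    constructor <;> linarith
  exact ⟨fun b hb => (key b hb).1, fun b hb => (key b hb).2⟩

lemma mem_finset_inf {α κ : Type*} [DecidableEq α] [Fintype α] {s : Finset κ}
    {f : κ → Finset α} {a : α} : a ∈ s.inf f ↔ ∀ k ∈ s, a ∈ f k := by
  induction s using Finset.cons_induction with
  | empty => simp [Finset.top_eq_univ]
  | cons k s hk ih => simp [Finset.inf_cons, Finset.mem_inter, ih]

lemma inf_mem_tight {T : Set (Finset (Fin N))} (hU : Finset.univ ∈ T)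
    (hI : ∀ A ∈ T, ∀ B ∈ T, A ∩ B ∈ T) {κ : Type*} (s : Finset κ) (f : κ → Finset (Fin N))
    (hf : ∀ k ∈ s, f k ∈ T) : s.inf f ∈ T := by
  induction s using Finset.cons_induction with
  | empty => simpa [Finset.top_eq_univ] using hU
  | cons k s hk ih =>
    rw [Finset.inf_cons]
    exact hI _ (hf k (mem_cons_self k s)) _ (ih fun k hk => hf k (mem_cons_of_mem hk))

lemma sup_mem_tight {T : Set (Finset (Fin N))} (hE : (∅ : Finset (Fin N)) ∈ T)
    (hI : ∀ A ∈ T, ∀ B ∈ T, A ∪ B ∈ T) {κ : Type*} (s : Finset κ) (f : κ → Finset (Fin N))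
    (hf : ∀ k ∈ s, f k ∈ T) : s.sup f ∈ T := by
  induction s using Finset.cons_induction with
  | empty => simpa using hE
  | cons k s hk ih =>
    rw [Finset.sup_cons]
    exact hI _ (hf k (mem_cons_self k s)) _ (ih fun k hk => hf k (mem_cons_of_mem hk))

/-- the explicit affine direction space of the face of calB -/
def V0 : Submodule ℝ (EuclideanSpace ℝ (Fin R × Fin N)) where
  carrier := {v | (∀ r : Fin R, ∀ A ∈ tight F y r, ∑ n ∈ A, v (r, n) = 0) ∧ ⟪y, v⟫ = 0}
  add_mem' := by
    rintro a b ⟨ha1, ha2⟩ ⟨hb1, hb2⟩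
    refine ⟨fun r A hA => ?_, by rw [inner_add_right, ha2, hb2, add_zero]⟩
    have : ∑ n ∈ A, ((a + b) (r, n)) = ∑ n ∈ A, a (r,n) + ∑ n ∈ A, b (r,n) := by
      rw [← Finset.sum_add_distrib]; rfl
    rw [this, ha1 r A hA, hb1 r A hA, add_zero]
  zero_mem' := by
    refine ⟨fun r A hA => ?_, by rw [inner_zero_right]⟩
    have : ∑ n ∈ A, ((0 : EuclideanSpace ℝ (Fin R × Fin N)) (r, n)) = 0 := by simp
    exact this
  smul_mem' := by
    rintro c a ⟨ha1, ha2⟩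
    refine ⟨fun r A hA => ?_, by rw [real_inner_smul_right, ha2, mul_zero]⟩
    have : ∑ n ∈ A, ((c • a) (r, n)) = c * ∑ n ∈ A, a (r,n) := by
      rw [Finset.mul_sum]; rfl
    rw [this, ha1 r A hA, mul_zero]

lemma mem_V0 (v : EuclideanSpace ℝ (Fin R × Fin N)) :
    v ∈ V0 F y ↔ (∀ r : Fin R, ∀ A ∈ tight F y r, ∑ n ∈ A, v (r, n) = 0) ∧ ⟪y, v⟫ = 0 :=
  Iff.rfl

/-- row equivalence: same membership in all tight sets -/
def simRel (r : Fin R) (i j : Fin N) : Prop := ∀ A ∈ tight F y r, (i ∈ A ↔ j ∈ A)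

lemma simRel_refl (r : Fin R) (i : Fin N) : simRel F y r i i := fun _ _ => Iff.rfl
lemma simRel_symm {r : Fin R} {i j : Fin N} (h : simRel F y r i j) : simRel F y r j i :=
  fun A hA => (h A hA).symm
lemma simRel_trans {r : Fin R} {i j k : Fin N} (h : simRel F y r i j)
    (h' : simRel F y r j k) : simRel F y r i k := fun A hA => (h A hA).trans (h' A hA)

lemma block_sum (hF : ∀ r, IsSubmodular (F r)) {v : EuclideanSpace ℝ (Fin R × Fin N)}
    (hv : v ∈ V0 F y) (r : Fin R) (b : Fin N) :
    ∑ m ∈ univ.filter (fun m => simRel F y r b m), v (r, m) = 0 := by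
  set T := tight F y r with hT
  have hIcl : ∀ A ∈ T, ∀ B ∈ T, A ∩ B ∈ T := fun A hA B hB =>
    (union_inter_tight F y hF r hA hB).2
  have hUcl : ∀ A ∈ T, ∀ B ∈ T, A ∪ B ∈ T := fun A hA B hB =>
    (union_inter_tight F y hF r hA hB).1
  set TS := univ.powerset.filter (fun A => A ∈ T ∧ b ∈ A) with hTS
  set IA := TS.inf id with hIA
  have hIA_mem : IA ∈ T := by
    apply inf_mem_tight (univ_tight F y r) hIcl
    intro A hA
    exact ((Finset.mem_filter.1 hA).2).1
  have hbIA : b ∈ IA := by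
    rw [hIA, mem_finset_inf]
    intro A hA
    exact ((Finset.mem_filter.1 hA).2).2
  have hIA_sub : ∀ A ∈ T, b ∈ A → IA ⊆ A := by
    intro A hA hbA
    have : A ∈ TS := Finset.mem_filter.2 ⟨Finset.mem_powerset.2 (Finset.subset_univ A), hA, hbA⟩
    have h := Finset.inf_le (f := (id : Finset (Fin N) → Finset (Fin N))) this
    simpa using h
  set OBS := univ.powerset.filter (fun A => A ∈ T ∧ b ∉ A) with hOBS
  set OB := OBS.sup (fun A => A ∩ IA) with hOB
  have hOB_mem : OB ∈ T := by
    apply sup_mem_tight (empty_tight F y hF r) hUcl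
    intro A hA
    exact hIcl _ ((Finset.mem_filter.1 hA).2).1 _ hIA_mem
  have hOB_sub : OB ⊆ IA := Finset.sup_le fun A _ => Finset.inter_subset_right
  have class_eq : univ.filter (fun m => simRel F y r b m) = IA \ OB := by
    ext m
    simp only [Finset.mem_filter, Finset.mem_univ, true_and, Finset.mem_sdiff]
    constructor
    · intro h
      refine ⟨?_, ?_⟩
      · rw [hIA, mem_finset_inf]
        intro A hA
        obtain ⟨-, hAT, hbA⟩ := Finset.mem_filter.1 hA
        exact (h A hAT).1 hbA
      · intro hm
        rw [hOB, Finset.mem_sup] at hm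
        obtain ⟨A, hA, hmA⟩ := hm
        obtain ⟨-, hAT, hbA⟩ := Finset.mem_filter.1 hA
        exact hbA ((h A hAT).2 (Finset.mem_inter.1 hmA).1)
    · rintro ⟨hmIA, hmOB⟩ A hAT
      constructor
      · intro hbA
        exact hIA_sub A hAT hbA hmIA
      · intro hmA
        by_contra hbA
        apply hmOB
        rw [hOB, Finset.mem_sup]
        refine ⟨A, Finset.mem_filter.2 ⟨Finset.mem_powerset.2 (Finset.subset_univ A), hAT, hbA⟩, ?_⟩
        exact Finset.mem_inter.2 ⟨hmA, hmIA⟩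
  rw [class_eq, Finset.sum_sdiff_eq_sub hOB_sub, hv.1 r IA hIA_mem, hv.1 r OB hOB_mem, sub_zero]

lemma tight_at_lattice {N : ℕ} (G : Finset (Fin N) → ℝ) (hG : IsSubmodular G)
    {s : Fin N → ℝ} (hs : ∀ A, ∑ n ∈ A, s n ≤ G A)
    {A B : Finset (Fin N)} (hA : ∑ n ∈ A, s n = G A) (hB : ∑ n ∈ B, s n = G B) :
    (∑ n ∈ A ∪ B, s n = G (A ∪ B)) ∧ (∑ n ∈ A ∩ B, s n = G (A ∩ B)) := by
  have h1 := hs (A ∪ B)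
  have h2 := hs (A ∩ B)
  have h3 : ∑ n ∈ A ∪ B, s n + ∑ n ∈ A ∩ B, s n = ∑ n ∈ A, s n + ∑ n ∈ B, s n :=
    Finset.sum_union_inter
  have h4 := hG.2 A B
  constructor <;> linarith

lemma superlevel_tight (hF : ∀ r, IsSubmodular (F r)) (r : Fin R) (θ : ℝ) :
    univ.filter (fun n => θ < y (r, n)) ∈ tight F y r := by
  intro b hb
  set A := univ.filter (fun n => θ < y (r, n)) with hAdef
  by_contra hne
  have hbB : (∀ A, ∑ n ∈ A, b (r,n) ≤ F r A) ∧ ∑ n, b (r,n) = F r univ := hb.1 r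
  set Tb := {A' : Finset (Fin N) | ∑ n ∈ A', b (r, n) = F r A'} with hTb
  have hUnivTb : Finset.univ ∈ Tb := hbB.2
  have hEmptyTb : (∅ : Finset (Fin N)) ∈ Tb := by simp [hTb, (hF r).1]
  have hIclTb : ∀ X ∈ Tb, ∀ Y ∈ Tb, X ∩ Y ∈ Tb := fun X hX Y hY =>
    (tight_at_lattice (F r) (hF r) hbB.1 hX hY).2
  have hUclTb : ∀ X ∈ Tb, ∀ Y ∈ Tb, X ∪ Y ∈ Tb := fun X hX Y hY =>
    (tight_at_lattice (F r) (hF r) hbB.1 hX hY).1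
  -- Key: exists i ∈ A, j ∉ A such that every b-tight set containing i contains j
  have Key : ∃ i ∈ A, ∃ j, j ∉ A ∧ ∀ A' ∈ Tb, i ∈ A' → j ∈ A' := by
    by_contra hK
    push_neg at hK
    have H : ∀ i j, ∃ A', i ∈ A → j ∉ A → (A' ∈ Tb ∧ i ∈ A' ∧ j ∉ A') := by
      intro i j
      by_cases hi : i ∈ A
      · by_cases hj : j ∈ A
        · exact ⟨∅, fun _ hj' => absurd hj hj'⟩
        · obtain ⟨A', hA'Tb, hiA', hjA'⟩ := hK i hi j hj
          exact ⟨A', fun _ _ => ⟨hA'Tb, hiA', hjA'⟩⟩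
      · exact ⟨∅, fun hi' _ => absurd hi' hi⟩
    choose g hg using H
    set S := fun i => (univ \ A).inf (g i) with hS
    have hS_Tb : ∀ i ∈ A, S i ∈ Tb := by
      intro i hi
      apply inf_mem_tight hUnivTb hIclTb
      intro j hj
      exact (hg i j hi (Finset.mem_sdiff.1 hj).2).1
    have hiS : ∀ i ∈ A, i ∈ S i := by
      intro i hi
      rw [hS, mem_finset_inf]
      intro j hj
      exact (hg i j hi (Finset.mem_sdiff.1 hj).2).2.1
    have hS_sub : ∀ i ∈ A, S i ⊆ A := by
      intro i hi m hm
      by_contra hmA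
      have hmem : m ∈ univ \ A := Finset.mem_sdiff.2 ⟨Finset.mem_univ m, hmA⟩
      have h1 : S i ⊆ g i m := by
        have h := Finset.inf_le (f := g i) hmem
        simpa using h
      exact (hg i m hi hmA).2.2 (h1 hm)
    have hAeq : A = A.sup S := by
      apply Finset.Subset.antisymm
      · intro i hi
        exact Finset.mem_sup.2 ⟨i, hi, hiS i hi⟩
      · intro m hm
        obtain ⟨i2, hi2, hmi2⟩ := Finset.mem_sup.1 hm
        exact hS_sub i2 hi2 hmi2
    have : A ∈ Tb := by
      rw [hAeq]
      exact sup_mem_tight hEmptyTb hUclTb A S hS_Tb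
    exact hne this
  obtain ⟨i, hiA, j, hjA, hij⟩ := Key
  have hij_ne : i ≠ j := fun h => hjA (h ▸ hiA)
  -- the slack
  set C := univ.powerset.filter (fun A' => i ∈ A' ∧ j ∉ A') with hC
  have hC_ne : C.Nonempty := by
    refine ⟨{i}, Finset.mem_filter.2 ⟨Finset.mem_powerset.2 (Finset.subset_univ _), ?_, ?_⟩⟩
    · exact Finset.mem_singleton_self i
    · simp [Finset.mem_singleton]
      exact fun h => hij_ne h.symm
  set ε := C.inf' hC_ne (fun A' => F r A' - ∑ n ∈ A', b (r, n)) with hε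
  have hε_pos : 0 < ε := by
    rw [hε, Finset.lt_inf'_iff]
    intro A' hA'
    obtain ⟨-, hiA', hjA'⟩ := Finset.mem_filter.1 hA'
    have hle := hbB.1 A'
    have : A' ∉ Tb := fun hmem => hjA' (hij A' hmem hiA')
    have : ∑ n ∈ A', b (r, n) ≠ F r A' := this
    have := lt_of_le_of_ne hle this
    linarith
  have hε_le : ∀ A' : Finset (Fin N), i ∈ A' → j ∉ A' → ε ≤ F r A' - ∑ n ∈ A', b (r, n) := by
    intro A' h1 h2
    apply Finset.inf'_le
    exact Finset.mem_filter.2 ⟨Finset.mem_powerset.2 (Finset.subset_univ _), h1, h2⟩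
  -- perturbed point
  set d : EuclideanSpace ℝ (Fin R × Fin N) :=
    WithLp.toLp 2 (fun p => if p = (r, i) then ε else if p = (r, j) then -ε else 0) with hd
  have hd_apply : ∀ r' n, d (r', n) =
      (if r' = r ∧ n = i then ε else 0) + (if r' = r ∧ n = j then -ε else 0) := by
    intro r' n
    rw [hd]
    simp only [PiLp.toLp_apply, Prod.mk.injEq]
    by_cases hr' : r' = r
    · subst hr'
      by_cases hn : n = i
      · subst hn
        simp [hij_ne]
      · by_cases hn2 : n = j
        · subst hn2
          simp [hn]
        · simp [hn, hn2]
    · simp [hr']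
  have hrowsum : ∀ A' : Finset (Fin N), ∑ n ∈ A', d (r, n) =
      (if i ∈ A' then ε else 0) + (if j ∈ A' then -ε else 0) := by
    intro A'
    have : ∀ n ∈ A', d (r, n) = (if n = i then ε else 0) + (if n = j then -ε else 0) := by
      intro n _
      rw [hd_apply]; simp
    rw [Finset.sum_congr rfl this, Finset.sum_add_distrib]
    congr 1 <;> simp [Finset.sum_ite_eq']
  have hrowsum' : ∀ r', r' ≠ r → ∀ n, d (r', n) = 0 := by
    intro r' hr' n
    rw [hd_apply]
    simp [hr']
  set b' := b + d with hb'
  have hb'row : ∀ r' n, b' (r', n) = b (r', n) + d (r', n) := fun r' n => rfl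
  have hb'calB : b' ∈ calB F := by
    intro r'
    by_cases hr' : r' = r
    · subst hr'
      show (∀ A : Finset (Fin N), ∑ n ∈ A, b' (r', n) ≤ F r' A) ∧ ∑ n, b' (r', n) = F r' univ
      constructor
      · intro A'
        have hsum : ∑ n ∈ A', b' (r', n) = ∑ n ∈ A', b (r', n) + ∑ n ∈ A', d (r', n) := by
          rw [← Finset.sum_add_distrib]; rfl
        rw [hsum, hrowsum]
        by_cases h1 : i ∈ A' <;> by_cases h2 : j ∈ A' <;> simp [h1, h2]
        · linarith [hbB.1 A']
        · linarith [hε_le A' h1 h2]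
        · linarith [hbB.1 A', hε_pos]
        · exact hbB.1 A'
      · have hsum : ∑ n, b' (r', n) = ∑ n, b (r', n) + ∑ n, d (r', n) := by
          rw [← Finset.sum_add_distrib]; rfl
        rw [hsum, hrowsum]
        simp [hbB.2]
    · have : (fun n => b' (r', n)) = (fun n => b (r', n)) := by
        funext n
        rw [hb'row, hrowsum' r' hr', add_zero]
      rw [this]
      exact hb.1 r'
  have hinner : ⟪y, b'⟫ = ⟪y, b⟫ + ε * (y (r, i) - y (r, j)) := by
    rw [hb', inner_add_right]
    congr 1
    rw [inner_eq]
    have : ∀ p : Fin R × Fin N, y p * d p =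
        (if p = (r,i) then ε * y (r,i) else 0) + (if p = (r,j) then -(ε * y (r,j)) else 0) := by
      intro p
      by_cases h1 : p = (r, i)
      · subst h1
        have hne2 : ((r,i) : Fin R × Fin N) ≠ (r,j) := by simp [hij_ne]
        rw [hd]
        simp [hne2]
        ring
      · by_cases h2 : p = (r, j)
        · subst h2
          rw [hd]
          simp [h1]
          ring
        · rw [hd]
          simp [h1, h2]
    rw [Finset.sum_congr rfl (fun p _ => this p), Finset.sum_add_distrib]
    simp [Finset.sum_ite_eq']
    ring
  have hyi : θ < y (r, i) := (Finset.mem_filter.1 hiA).2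
  have hyj : ¬ θ < y (r, j) := fun h => hjA (Finset.mem_filter.2 ⟨Finset.mem_univ j, h⟩)
  push_neg at hyj
  have : ⟪y, b⟫ < ⟪y, b'⟫ := by
    rw [hinner]
    have : 0 < ε * (y (r, i) - y (r, j)) := by
      apply mul_pos hε_pos
      linarith
    linarith
  exact absurd (hb.2 b' hb'calB) (not_le.2 this)

lemma y_const_on_sim (hF : ∀ r, IsSubmodular (F r)) {r : Fin R} {i j : Fin N}
    (h : simRel F y r i j) : y (r, i) = y (r, j) := by
  by_contra hne
  rcases lt_or_gt_of_ne hne with hlt | hgt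
  · have hA := superlevel_tight F y hF r (y (r, i))
    have := (h _ hA).2 (by simp [hlt])
    simp at this
  · have hA := superlevel_tight F y hF r (y (r, j))
    have := (h _ hA).1 (by simp [hgt])
    simp at this


lemma face_value_eq {p q : EuclideanSpace ℝ (Fin R × Fin N)}
    (hp : p ∈ face (calB F) y) (hq : q ∈ face (calB F) y) : ⟪y, p⟫ = ⟪y, q⟫ :=
  le_antisymm (hq.2 p hp.1) (hp.2 q hq.1)

lemma face_convex : Convex ℝ (face (calB F) y) := by
  rintro p hp q hq a b ha hb hab
  have hmemB : a • p + b • q ∈ calB F := by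
    intro r
    show (∀ A : Finset (Fin N), ∑ n ∈ A, (a • p + b • q) (r, n) ≤ F r A) ∧ ∑ n, (a • p + b • q) (r, n) = F r univ
    constructor
    · intro A
      have h1 : ∑ n ∈ A, (a • p + b • q) (r, n)
          = a * ∑ n ∈ A, p (r, n) + b * ∑ n ∈ A, q (r, n) := by
        rw [Finset.mul_sum, Finset.mul_sum, ← Finset.sum_add_distrib]; rfl
      rw [h1]
      have h2 : a * ∑ n ∈ A, p (r, n) ≤ a * F r A :=
        mul_le_mul_of_nonneg_left (((hp.1) r).1 A) ha
      have h3 : b * ∑ n ∈ A, q (r, n) ≤ b * F r A :=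
        mul_le_mul_of_nonneg_left (((hq.1) r).1 A) hb
      have : a * F r A + b * F r A = F r A := by rw [← add_mul, hab, one_mul]
      linarith
    · have h1 : ∑ n, (a • p + b • q) (r, n)
          = a * ∑ n, p (r, n) + b * ∑ n, q (r, n) := by
        rw [Finset.mul_sum, Finset.mul_sum, ← Finset.sum_add_distrib]; rfl
      rw [h1, ((hp.1) r).2, ((hq.1) r).2, ← add_mul, hab, one_mul]
  refine ⟨hmemB, fun q' hq' => ?_⟩
  have h1 : ⟪y, a • p + b • q⟫ = a * ⟪y, p⟫ + b * ⟪y, q⟫ := by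
    rw [inner_add_right, real_inner_smul_right, real_inner_smul_right]
  have h2 : ⟪y, q'⟫ ≤ ⟪y, p⟫ := hp.2 q' hq'
  have h3 : ⟪y, q'⟫ ≤ ⟪y, q⟫ := hq.2 q' hq'
  have h4 : a * ⟪y, q'⟫ ≤ a * ⟪y, p⟫ := mul_le_mul_of_nonneg_left h2 ha
  have h5 : b * ⟪y, q'⟫ ≤ b * ⟪y, q⟫ := mul_le_mul_of_nonneg_left h3 hb
  have h6 : a * ⟪y, q'⟫ + b * ⟪y, q'⟫ = ⟪y, q'⟫ := by rw [← add_mul, hab, one_mul]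
  linarith

lemma euclid_sum_apply {κ : Type*} (s : Finset κ)
    (f : κ → EuclideanSpace ℝ (Fin R × Fin N)) (p : Fin R × Fin N) :
    (∑ k ∈ s, f k) p = ∑ k ∈ s, f k p := by
  induction s using Finset.cons_induction with
  | empty => rfl
  | cons k s hk ih =>
    rw [Finset.sum_cons, Finset.sum_cons, ← ih]; rfl

lemma exists_slack_point (hy : (face (calB F) y).Nonempty) :
    ∃ p ∈ face (calB F) y, ∀ r A, A ∉ tight F y r → ∑ n ∈ A, p (r, n) < F r A := by
  obtain ⟨bstar, hbstar⟩ := hy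
  set J := (univ : Finset (Fin R × Finset (Fin N))).filter
    (fun ra => ra.2 ∉ tight F y ra.1) with hJ
  have hwit : ∀ ra : Fin R × Finset (Fin N), ∃ b, ra ∈ J →
      (b ∈ face (calB F) y ∧ ∑ n ∈ ra.2, b (ra.1, n) < F ra.1 ra.2) := by
    intro ra
    by_cases hra : ra ∈ J
    · have : ra.2 ∉ tight F y ra.1 := (Finset.mem_filter.1 hra).2
      simp only [tight, Set.mem_setOf_eq, not_forall] at this
      obtain ⟨b, hb, hne⟩ := this
      exact ⟨b, fun _ => ⟨hb, lt_of_le_of_ne (((hb.1) ra.1).1 ra.2) hne⟩⟩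
    · exact ⟨bstar, fun h => absurd h hra⟩
  choose wit hwit using hwit
  rcases Finset.eq_empty_or_nonempty J with hJe | hJne
  · refine ⟨bstar, hbstar, fun r A hA => ?_⟩
    exfalso
    have : (r, A) ∈ J := Finset.mem_filter.2 ⟨Finset.mem_univ _, hA⟩
    rw [hJe] at this
    exact absurd this (Finset.notMem_empty _)
  · set m := (J.card : ℝ) with hm
    have hm_pos : 0 < m := by
      rw [hm]
      exact_mod_cast Finset.card_pos.2 hJne
    set phat := ∑ ra ∈ J, (m⁻¹ : ℝ) • wit ra with hphat
    have hphat_mem : phat ∈ face (calB F) y := by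
      rw [hphat]
      apply Convex.sum_mem (face_convex F y)
      · intro ra _; positivity
      · rw [Finset.sum_const, nsmul_eq_mul]
        field_simp
        exact hm.symm
      · intro ra hra
        exact (hwit ra hra).1
    refine ⟨phat, hphat_mem, fun r A hA => ?_⟩
    have hraJ : (r, A) ∈ J := Finset.mem_filter.2 ⟨Finset.mem_univ _, hA⟩
    have hcoord : ∀ n, phat (r, n) = ∑ ra ∈ J, m⁻¹ * wit ra (r, n) := by
      intro n
      rw [hphat, euclid_sum_apply]
      rfl
    have hsum : ∑ n ∈ A, phat (r, n) = ∑ ra ∈ J, m⁻¹ * ∑ n ∈ A, wit ra (r, n) := by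
      rw [Finset.sum_congr rfl (fun n _ => hcoord n), Finset.sum_comm]
      exact Finset.sum_congr rfl fun ra _ => by rw [Finset.mul_sum]
    rw [hsum]
    have hlt : ∑ ra ∈ J, m⁻¹ * ∑ n ∈ A, wit ra (r, n) < ∑ ra ∈ J, m⁻¹ * F r A := by
      apply Finset.sum_lt_sum
      · intro ra hra
        apply mul_le_mul_of_nonneg_left _ (by positivity)
        exact (((hwit ra hra).1.1) r).1 A
      · refine ⟨(r, A), hraJ, ?_⟩
        apply mul_lt_mul_of_pos_left _ (by positivity)
        exact (hwit _ hraJ).2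
    have : ∑ ra ∈ J, m⁻¹ * F r A = F r A := by
      rw [Finset.sum_const, nsmul_eq_mul]
      field_simp
      rw [hm]
    linarith

lemma aff0_face_calB (hy : (face (calB F) y).Nonempty) :
    aff0 (face (calB F) y) = V0 F y := by
  apply le_antisymm
  · unfold aff0
    rw [direction_affineSpan, vectorSpan_def]
    apply Submodule.span_le.2
    rintro w hw
    rw [Set.mem_vsub] at hw
    obtain ⟨p, hp, q, hq, rfl⟩ := hw
    have hsub : p -ᵥ q = p - q := rfl
    rw [SetLike.mem_coe, hsub]
    constructor
    · intro r A hA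
      have h1 : ∑ n ∈ A, (p - q) (r, n) = ∑ n ∈ A, p (r, n) - ∑ n ∈ A, q (r, n) := by
        rw [← Finset.sum_sub_distrib]; rfl
      rw [h1, hA p hp, hA q hq, sub_self]
    · rw [inner_sub_right, face_value_eq F y hp hq, sub_self]
  · intro v hv
    obtain ⟨phat, hphat, hslack⟩ := exists_slack_point F y hy
    -- choose epsilon
    set J := (univ : Finset (Fin R × Finset (Fin N))).filter
      (fun ra => ra.2 ∉ tight F y ra.1) with hJ
    set g : Fin R × Finset (Fin N) → ℝ := fun ra =>
      (F ra.1 ra.2 - ∑ n ∈ ra.2, phat (ra.1, n)) / (|∑ n ∈ ra.2, v (ra.1, n)| + 1) with hg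
    set E := insert (1:ℝ) (J.image g) with hE
    have hEne : E.Nonempty := ⟨1, Finset.mem_insert_self _ _⟩
    set ε := E.min' hEne with hε
    have hε_pos : 0 < ε := by
      have hmem := Finset.min'_mem E hEne
      rcases Finset.mem_insert.1 hmem with h | h
      · rw [hε, h]
        norm_num
      · obtain ⟨ra, hra, hra2⟩ := Finset.mem_image.1 h
        have hslk := hslack ra.1 ra.2 (Finset.mem_filter.1 hra).2
        rw [hε, ← hra2]
        simp only [hg]
        exact div_pos (by linarith) (by positivity)
    have hε_le : ∀ ra ∈ J, ε ≤ g ra := by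
      intro ra hra
      apply Finset.min'_le
      rw [hE]
      exact Finset.mem_insert_of_mem (Finset.mem_image_of_mem g hra)
    have hkey : phat + ε • v ∈ face (calB F) y := by
      have hmemB : phat + ε • v ∈ calB F := by
        intro r
        show (∀ A : Finset (Fin N), ∑ n ∈ A, (phat + ε • v) (r, n) ≤ F r A) ∧ ∑ n, (phat + ε • v) (r, n) = F r univ
        constructor
        · intro A
          have h1 : ∑ n ∈ A, (phat + ε • v) (r, n)
              = ∑ n ∈ A, phat (r, n) + ε * ∑ n ∈ A, v (r, n) := by
            rw [Finset.mul_sum, ← Finset.sum_add_distrib]; rfl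
          rw [h1]
          by_cases hA : A ∈ tight F y r
          · rw [hv.1 r A hA, mul_zero, add_zero, hA phat hphat]
          · have hraJ : (r, A) ∈ J := Finset.mem_filter.2 ⟨Finset.mem_univ _, hA⟩
            have h2 := hε_le _ hraJ
            rw [hg] at h2
            set S := ∑ n ∈ A, v (r, n)
            set D := F r A - ∑ n ∈ A, phat (r, n) with hD
            have hD_pos : 0 < D := by
              rw [hD]; have := hslack r A hA; linarith
            have h3 : ε * S ≤ ε * |S| := by
              apply mul_le_mul_of_nonneg_left (le_abs_self S) hε_pos.le
            have h4 : ε * |S| ≤ (D / (|S| + 1)) * |S| := by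
              apply mul_le_mul_of_nonneg_right h2 (abs_nonneg S)
            have h5 : (D / (|S| + 1)) * |S| < D := by
              rw [div_mul_eq_mul_div, div_lt_iff₀ (by positivity)]
              nlinarith [abs_nonneg S]
            linarith
        · have h1 : ∑ n, (phat + ε • v) (r, n)
              = ∑ n, phat (r, n) + ε * ∑ n, v (r, n) := by
            rw [Finset.mul_sum, ← Finset.sum_add_distrib]; rfl
          rw [h1, hv.1 r univ (univ_tight F y r), mul_zero, add_zero]
          exact univ_tight F y r phat hphat
      refine ⟨hmemB, fun q' hq' => ?_⟩
      have h1 : ⟪y, phat + ε • v⟫ = ⟪y, phat⟫ := by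
        rw [inner_add_right, real_inner_smul_right, hv.2, mul_zero, add_zero]
      rw [h1]
      exact hphat.2 q' hq'
    have h1 := AffineSubspace.vsub_mem_direction
      (subset_affineSpan ℝ _ hkey) (subset_affineSpan ℝ _ hphat)
    have h2 : (phat + ε • v) -ᵥ phat = ε • v := by
      rw [vsub_eq_sub]; abel
    rw [h2] at h1
    have h3 := Submodule.smul_mem (affineSpan ℝ (face (calB F) y)).direction ε⁻¹ h1
    rw [smul_smul, inv_mul_cancel₀ hε_pos.ne', one_smul] at h3
    exact h3

lemma sum_two_point {ι : Type*} [Fintype ι] [DecidableEq ι] {a b : ι} (hab : a ≠ b)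
    (c d : ℝ) (f : ι → ℝ) :
    ∑ p, (if p = a then c else if p = b then d else 0) * f p = c * f a + d * f b := by
  have h : ∀ p : ι, (if p = a then c else if p = b then d else 0) * f p
      = (if p = a then c * f a else 0) + (if p = b then d * f b else 0) := by
    intro p
    by_cases h1 : p = a
    · subst h1
      simp [hab]
    · by_cases h2 : p = b
      · subst h2
        simp [h1]
      · simp [h1, h2]
  rw [Finset.sum_congr rfl (fun p _ => h p), Finset.sum_add_distrib]
  simp [Finset.sum_ite_eq']

/-- the exchange graph -/
def simGraph : SimpleGraph (Fin N) where
  Adj i j := i ≠ j ∧ ∃ r, simRel F y r i j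
  symm := by
    constructor
    rintro i j ⟨hne, r, hr⟩
    exact ⟨hne.symm, r, simRel_symm F y hr⟩
  loopless := by
    constructor
    rintro i ⟨hne, -⟩
    exact hne rfl

def edgeMove (i j : Fin N) (r : Fin R) : EuclideanSpace ℝ (Fin R × Fin N) :=
  WithLp.toLp 2 (fun p => if p = (r, i) then 1 else if p = (r, j) then -1 else 0)

lemma edgeMove_apply (i j : Fin N) (r : Fin R) (p : Fin R × Fin N) :
    edgeMove (N := N) (R := R) i j r p
      = if p = (r, i) then 1 else if p = (r, j) then -1 else 0 := rfl

lemma edgeMove_colsum {i j : Fin N} (hij : i ≠ j) (rc : Fin R) (n : Fin N) :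
    ∑ r, edgeMove (N := N) i j rc (r, n)
      = (if n = i then (1:ℝ) else 0) - (if n = j then 1 else 0) := by
  have h : ∀ r : Fin R, edgeMove (N := N) i j rc (r, n)
      = (if r = rc ∧ n = i then (1:ℝ) else 0) - (if r = rc ∧ n = j then 1 else 0) := by
    intro r
    rw [edgeMove_apply]
    simp only [Prod.mk.injEq]
    by_cases h1 : r = rc
    · subst h1
      by_cases h2 : n = i
      · subst h2
        simp [hij]
      · by_cases h3 : n = j
        · subst h3
          simp [h2]
        · simp [h2, h3]
    · simp [h1]
  rw [Finset.sum_congr rfl (fun r _ => h r), Finset.sum_sub_distrib]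
  have e1 : ∑ r : Fin R, (if r = rc ∧ n = i then (1:ℝ) else 0) = if n = i then 1 else 0 := by
    by_cases h2 : n = i
    · simp [h2, Finset.sum_ite_eq', Finset.sum_ite_eq]
    · simp [h2]
  have e2 : ∑ r : Fin R, (if r = rc ∧ n = j then (1:ℝ) else 0) = if n = j then 1 else 0 := by
    by_cases h3 : n = j
    · simp [h3, Finset.sum_ite_eq', Finset.sum_ite_eq]
    · simp [h3]
  rw [e1, e2]

lemma edgeMove_mem_V0 (hF : ∀ r, IsSubmodular (F r)) {i j : Fin N} {r : Fin R}
    (hsim : simRel F y r i j) (hij : i ≠ j) :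
    edgeMove (N := N) i j r ∈ V0 F y := by
  constructor
  · intro r' A hA
    have h : ∀ n ∈ A, edgeMove (N := N) i j r (r', n)
        = (if r' = r ∧ n = i then (1:ℝ) else 0) - (if r' = r ∧ n = j then 1 else 0) := by
      intro n _
      rw [edgeMove_apply]
      simp only [Prod.mk.injEq]
      by_cases h1 : r' = r
      · subst h1
        by_cases h2 : n = i
        · subst h2
          simp [hij]
        · by_cases h3 : n = j
          · subst h3
            simp [h2]
          · simp [h2, h3]
      · simp [h1]
    rw [Finset.sum_congr rfl h, Finset.sum_sub_distrib]
    by_cases h1 : r' = r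
    · subst h1
      simp only [true_and]
      rw [Finset.sum_ite_eq' A i (fun _ => (1:ℝ)), Finset.sum_ite_eq' A j (fun _ => (1:ℝ))]
      have := hsim A hA
      by_cases h2 : i ∈ A
      · simp [h2, this.1 h2]
      · have : j ∉ A := fun hj => h2 (this.2 hj)
        simp [h2, this]
    · simp [h1]
  · rw [inner_eq]
    have h : ∀ p : Fin R × Fin N, y p * edgeMove (N := N) i j r p
        = edgeMove (N := N) i j r p * y p := fun p => mul_comm _ _
    rw [Finset.sum_congr rfl (fun p _ => h p)]
    have hne : ((r, i) : Fin R × Fin N) ≠ (r, j) := by simp [hij]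
    rw [show (fun p => edgeMove (N := N) i j r p * y p)
        = fun p => (if p = (r,i) then (1:ℝ) else if p = (r,j) then -1 else 0) * y p from rfl]
    rw [sum_two_point hne 1 (-1) y]
    rw [y_const_on_sim F y hF hsim]
    ring

lemma edgeMove_normsq {i j : Fin N} (hij : i ≠ j) (r : Fin R) :
    ⟪edgeMove (N := N) i j r, edgeMove (N := N) i j r⟫ = 2 := by
  rw [inner_eq]
  have hne : ((r, i) : Fin R × Fin N) ≠ (r, j) := by simp [hij]
  rw [show (fun p => edgeMove (N := N) i j r p * edgeMove (N := N) i j r p)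
      = fun p => (if p = (r,i) then (1:ℝ) else if p = (r,j) then -1 else 0)
          * edgeMove (N := N) i j r p from rfl]
  rw [sum_two_point hne 1 (-1) _]
  rw [edgeMove_apply, edgeMove_apply]
  simp [hne, hij.symm]
  norm_num

def walkMove : {i j : Fin N} → (simGraph F y).Walk i j → EuclideanSpace ℝ (Fin R × Fin N)
  | _, _, SimpleGraph.Walk.nil => 0
  | _, _, @SimpleGraph.Walk.cons _ _ i k _ h p =>
      edgeMove i k (Classical.choose h.2) + walkMove p

lemma walkMove_nil {i : Fin N} :
    walkMove F y (SimpleGraph.Walk.nil : (simGraph F y).Walk i i) = 0 := rfl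

lemma walkMove_cons {i k j : Fin N} (h : (simGraph F y).Adj i k)
    (p : (simGraph F y).Walk k j) :
    walkMove F y (SimpleGraph.Walk.cons h p)
      = edgeMove i k (Classical.choose h.2) + walkMove F y p := rfl

lemma walkMove_support {i j : Fin N} (p : (simGraph F y).Walk i j) :
    ∀ n, n ∉ p.support → ∀ r, walkMove F y p (r, n) = 0 := by
  induction p with
  | nil =>
    intro n hn r
    rw [walkMove_nil]
    rfl
  | @cons i k j h p ih =>
    intro n hn r
    rw [SimpleGraph.Walk.support_cons, List.mem_cons] at hn
    push_neg at hn
    have h1 : n ∉ p.support := hn.2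
    have h2 : n ≠ i := hn.1
    have h3 : n ≠ k := fun he => (he ▸ h1) p.start_mem_support
    rw [walkMove_cons]
    show edgeMove i k (Classical.choose h.2) (r, n) + walkMove F y p (r, n) = 0
    rw [ih n h1 r, edgeMove_apply]
    simp [Prod.ext_iff, h2, h3]

lemma walkMove_start_nonneg {i j : Fin N} (p : (simGraph F y).Walk i j) (hp : p.IsPath) :
    ∀ r, 0 ≤ walkMove F y p (r, i) := by
  induction p with
  | nil => intro r; exact le_refl 0
  | @cons i k j h p ih =>
    intro r
    rw [SimpleGraph.Walk.cons_isPath_iff] at hp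
    rw [walkMove_cons]
    show 0 ≤ edgeMove i k (Classical.choose h.2) (r, i) + walkMove F y p (r, i)
    rw [walkMove_support F y p i hp.2 r, add_zero, edgeMove_apply]
    have : ¬ ((r, i) : Fin R × Fin N) = (Classical.choose h.2, k) := by
      simp [Prod.ext_iff]
      intro _
      exact h.1
    by_cases h1 : ((r,i) : Fin R × Fin N) = (Classical.choose h.2, i) <;> simp [h1, this]

lemma walkMove_colsum {i j : Fin N} (p : (simGraph F y).Walk i j) (n : Fin N) :
    ∑ r, walkMove F y p (r, n) = (if n = i then (1:ℝ) else 0) - (if n = j then 1 else 0) := by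
  induction p with
  | nil =>
    simp only [walkMove_nil]
    simp
  | @cons i k j h p ih =>
    have hsum : ∀ r, walkMove F y (SimpleGraph.Walk.cons h p) (r, n)
        = edgeMove i k (Classical.choose h.2) (r, n) + walkMove F y p (r, n) := by
      intro r
      rw [walkMove_cons]
      rfl
    rw [Finset.sum_congr rfl (fun r _ => hsum r), Finset.sum_add_distrib, ih,
      edgeMove_colsum h.1 _ n]
    ring

lemma walkMove_mem_V0 (hF : ∀ r, IsSubmodular (F r)) {i j : Fin N}
    (p : (simGraph F y).Walk i j) : walkMove F y p ∈ V0 F y := by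
  induction p with
  | nil => exact (V0 F y).zero_mem
  | @cons i k j h p ih =>
    have he : edgeMove (N := N) i k (Classical.choose h.2) ∈ V0 F y :=
      edgeMove_mem_V0 F y hF (Classical.choose_spec h.2) h.1
    exact (V0 F y).add_mem he ih

lemma walkMove_normsq {i j : Fin N} (p : (simGraph F y).Walk i j) (hp : p.IsPath) :
    ‖walkMove F y p‖^2 ≤ 2 * p.length := by
  induction p with
  | nil =>
    rw [walkMove_nil]
    simp
  | @cons i k j h p ih =>
    rw [SimpleGraph.Walk.cons_isPath_iff] at hp
    have hIH := ih hp.1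
    set rc := Classical.choose h.2 with hrc
    rw [walkMove_cons]
    have hcross : ⟪edgeMove (N := N) i k rc, walkMove F y p⟫ ≤ 0 := by
      rw [inner_eq]
      rw [show (fun q => edgeMove (N := N) i k rc q * walkMove F y p q)
          = fun q => (if q = (rc,i) then (1:ℝ) else if q = (rc,k) then -1 else 0)
              * walkMove F y p q from rfl]
      have hne : ((rc, i) : Fin R × Fin N) ≠ (rc, k) := by simp [h.1]
      rw [sum_two_point hne 1 (-1) _]
      rw [walkMove_support F y p i hp.2 rc]
      have := walkMove_start_nonneg F y p hp.1 rc
      nlinarith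
    have hnormsq : ‖edgeMove (N := N) i k rc + walkMove F y p‖^2
        = ⟪edgeMove (N := N) i k rc, edgeMove (N := N) i k rc⟫
          + 2 * ⟪edgeMove (N := N) i k rc, walkMove F y p⟫ + ‖walkMove F y p‖^2 := by
      rw [← real_inner_self_eq_norm_sq, ← real_inner_self_eq_norm_sq,
        real_inner_add_add_self]
    rw [hnormsq, edgeMove_normsq h.1, SimpleGraph.Walk.length_cons]
    push_cast
    linarith

def reachClass (n : Fin N) : Finset (Fin N) :=
  univ.filter (fun m => (simGraph F y).Reachable n m)

lemma mem_reachClass {n m : Fin N} :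
    m ∈ reachClass F y n ↔ (simGraph F y).Reachable n m := by
  simp [reachClass]

lemma reachClass_self (n : Fin N) : n ∈ reachClass F y n :=
  (mem_reachClass F y).2 (SimpleGraph.Reachable.refl n)

lemma reachClass_congr {n m : Fin N} (h : (simGraph F y).Reachable n m) :
    reachClass F y n = reachClass F y m := by
  ext k
  rw [mem_reachClass, mem_reachClass]
  exact ⟨fun h' => h.symm.trans h', fun h' => h.trans h'⟩

lemma min'_eq_of_eq {α : Type*} [LinearOrder α] {s t : Finset α} (h : s = t)
    (hs : s.Nonempty) (ht : t.Nonempty) : s.min' hs = t.min' ht := by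
  subst h; rfl

def groot (n : Fin N) : Fin N := (reachClass F y n).min' ⟨n, reachClass_self F y n⟩

lemma groot_reach (n : Fin N) : (simGraph F y).Reachable n (groot F y n) :=
  (mem_reachClass F y).1 (Finset.min'_mem _ _)

lemma groot_congr {n m : Fin N} (h : (simGraph F y).Reachable n m) :
    groot F y n = groot F y m :=
  min'_eq_of_eq (reachClass_congr F y h) _ _

lemma sim_reachable {r : Fin R} {n m : Fin N} (h : simRel F y r n m) :
    (simGraph F y).Reachable n m := by
  by_cases hne : n = m
  · subst hne; exact SimpleGraph.Reachable.refl n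
  · exact SimpleGraph.Adj.reachable ⟨hne, r, h⟩

def blockRep (r : Fin R) (n : Fin N) : Fin N :=
  (univ.filter (fun m => simRel F y r n m)).min'
    ⟨n, Finset.mem_filter.2 ⟨Finset.mem_univ n, simRel_refl F y r n⟩⟩

lemma blockRep_sim (r : Fin R) (n : Fin N) : simRel F y r n (blockRep F y r n) :=
  (Finset.mem_filter.1 (Finset.min'_mem _ _)).2

lemma blockRep_congr {r : Fin R} {n m : Fin N} (h : simRel F y r n m) :
    blockRep F y r n = blockRep F y r m := by
  apply min'_eq_of_eq
  ext k
  rw [Finset.mem_filter, Finset.mem_filter]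
  exact ⟨fun h' => ⟨h'.1, simRel_trans F y (simRel_symm F y h) h'.2⟩,
    fun h' => ⟨h'.1, simRel_trans F y h h'.2⟩⟩

lemma class_row_sum (hF : ∀ r, IsSubmodular (F r)) {v : EuclideanSpace ℝ (Fin R × Fin N)}
    (hv : v ∈ V0 F y) (r : Fin R) (m : Fin N) :
    ∑ n ∈ reachClass F y m, v (r, n) = 0 := by
  have hmaps : ∀ n ∈ reachClass F y m, blockRep F y r n ∈ reachClass F y m := by
    intro n hn
    rw [mem_reachClass]
    exact ((mem_reachClass F y).1 hn).trans (sim_reachable F y (blockRep_sim F y r n))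
  rw [← Finset.sum_fiberwise_of_maps_to hmaps (fun n => v (r, n))]
  apply Finset.sum_eq_zero
  intro j hj
  by_cases hfix : blockRep F y r j = j
  · have hset : (reachClass F y m).filter (fun n => blockRep F y r n = j)
        = univ.filter (fun n => simRel F y r j n) := by
      ext n
      simp only [Finset.mem_filter, Finset.mem_univ, true_and]
      constructor
      · rintro ⟨h1, h2⟩
        have hsim := blockRep_sim F y r n
        rw [h2] at hsim
        exact simRel_symm F y hsim
      · intro hsim
        refine ⟨?_, ?_⟩
        · exact (mem_reachClass F y).2
            (((mem_reachClass F y).1 hj).trans (sim_reachable F y hsim))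
        · rw [blockRep_congr F y (simRel_symm F y hsim)]
          exact hfix
    rw [hset]
    exact block_sum F y hF hv r j
  · have hset : (reachClass F y m).filter (fun n => blockRep F y r n = j) = ∅ := by
      rw [Finset.filter_eq_empty_iff]
      intro n _ hrep
      apply hfix
      have hsim := blockRep_sim F y r n
      rw [hrep] at hsim
      rw [blockRep_congr F y (simRel_symm F y hsim)]
      exact hrep
    rw [hset]
    simp

lemma class_sum (hF : ∀ r, IsSubmodular (F r)) {v : EuclideanSpace ℝ (Fin R × Fin N)}
    (hv : v ∈ V0 F y) (m : Fin N) :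
    ∑ n ∈ reachClass F y m, (∑ r, v (r, n)) = 0 := by
  rw [Finset.sum_comm]
  exact Finset.sum_eq_zero fun r _ => class_row_sum F y hF hv r m

def pathTo (n : Fin N) : (simGraph F y).Walk n (groot F y n) :=
  ((groot_reach F y n).some).toPath.1

lemma pathTo_isPath (n : Fin N) : (pathTo F y n).IsPath :=
  ((groot_reach F y n).some).toPath.2

def corr (v : EuclideanSpace ℝ (Fin R × Fin N)) : EuclideanSpace ℝ (Fin R × Fin N) :=
  ∑ n, (∑ r, v (r, n)) • walkMove F y (pathTo F y n)

lemma corr_mem_V0 (hF : ∀ r, IsSubmodular (F r)) (v : EuclideanSpace ℝ (Fin R × Fin N)) :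
    corr F y v ∈ V0 F y :=
  Submodule.sum_mem _ fun n _ => Submodule.smul_mem _ _ (walkMove_mem_V0 F y hF _)

lemma corr_colsum (hF : ∀ r, IsSubmodular (F r)) {v : EuclideanSpace ℝ (Fin R × Fin N)}
    (hv : v ∈ V0 F y) (m : Fin N) :
    ∑ r, corr F y v (r, m) = ∑ r, v (r, m) := by
  have hcoord : ∀ p : Fin R × Fin N,
      corr F y v p = ∑ n, (∑ r, v (r, n)) * walkMove F y (pathTo F y n) p := by
    intro p
    rw [corr, euclid_sum_apply]
    rfl
  have h1 : ∑ r, corr F y v (r, m)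
      = ∑ n, (∑ r, v (r, n)) * (∑ r, walkMove F y (pathTo F y n) (r, m)) := by
    rw [Finset.sum_congr rfl (fun r _ => hcoord (r, m)), Finset.sum_comm]
    exact Finset.sum_congr rfl fun n _ => by rw [Finset.mul_sum]
  rw [h1]
  have h2 : ∀ n : Fin N, (∑ r, v (r, n)) * (∑ r, walkMove F y (pathTo F y n) (r, m))
      = (if m = n then (∑ r, v (r, n)) else 0)
        - (if m = groot F y n then (∑ r, v (r, n)) else 0) := by
    intro n
    rw [walkMove_colsum, mul_sub]
    congr 1
    · by_cases e1 : m = n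
      · rw [if_pos e1, if_pos e1, mul_one]
      · rw [if_neg e1, if_neg e1, mul_zero]
    · by_cases e2 : m = groot F y n
      · rw [if_pos e2, if_pos e2, mul_one]
      · rw [if_neg e2, if_neg e2, mul_zero]
  rw [Finset.sum_congr rfl (fun n _ => h2 n), Finset.sum_sub_distrib]
  have h3 : ∑ n, (if m = n then (∑ r, v (r, n)) else 0) = ∑ r, v (r, m) := by
    rw [Finset.sum_ite_eq]
    simp
  have h4 : ∑ n : Fin N, (if m = groot F y n then (∑ r, v (r, n)) else 0) = 0 := by
    rw [← Finset.sum_filter]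
    by_cases hfix : groot F y m = m
    · have hset : univ.filter (fun n => m = groot F y n) = reachClass F y m := by
        ext n
        simp only [Finset.mem_filter, Finset.mem_univ, true_and, mem_reachClass]
        constructor
        · intro h
          have hr := groot_reach F y n
          rw [← h] at hr
          exact hr.symm
        · intro h
          rw [groot_congr F y h.symm]
          exact hfix.symm
      rw [hset]
      exact class_sum F y hF hv m
    · have hset : univ.filter (fun n => m = groot F y n) = ∅ := by
        rw [Finset.filter_eq_empty_iff]
        intro n _ h
        apply hfix
        have h2' := groot_congr F y (groot_reach F y n)
        rw [← h] at h2'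
        rw [← h2', h]
      rw [hset]
      simp
  rw [h3, h4, sub_zero]

lemma corr_norm_le (v : EuclideanSpace ℝ (Fin R × Fin N)) :
    ‖corr F y v‖ ≤ Real.sqrt (2 * N) * ∑ n, |∑ r, v (r, n)| := by
  have h1 : ‖corr F y v‖ ≤ ∑ n, ‖(∑ r, v (r, n)) • walkMove F y (pathTo F y n)‖ := by
    rw [corr]
    exact norm_sum_le _ _
  have h2 : ∀ n : Fin N, ‖(∑ r, v (r, n)) • walkMove F y (pathTo F y n)‖
      ≤ |∑ r, v (r, n)| * Real.sqrt (2 * N) := by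
    intro n
    rw [norm_smul, Real.norm_eq_abs]
    apply mul_le_mul_of_nonneg_left _ (abs_nonneg _)
    have hlen : ((pathTo F y n).length : ℝ) ≤ N := by
      have := SimpleGraph.Walk.IsPath.length_lt (pathTo_isPath F y n)
      rw [Fintype.card_fin] at this
      exact_mod_cast this.le
    have hsq := walkMove_normsq F y (pathTo F y n) (pathTo_isPath F y n)
    rw [Real.le_sqrt (norm_nonneg _)]
    nlinarith [norm_nonneg (walkMove F y (pathTo F y n)), show (0:ℝ) ≤ (N:ℝ) by positivity]
    positivity
  calc ‖corr F y v‖ ≤ ∑ n, ‖(∑ r, v (r, n)) • walkMove F y (pathTo F y n)‖ := h1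
    _ ≤ ∑ n, |∑ r, v (r, n)| * Real.sqrt (2 * N) := Finset.sum_le_sum fun n _ => h2 n
    _ = Real.sqrt (2 * N) * ∑ n, |∑ r, v (r, n)| := by
        rw [← Finset.sum_mul]; ring

lemma core_ineq (hF : ∀ r, IsSubmodular (F r)) {v : EuclideanSpace ℝ (Fin R × Fin N)}
    (hv : v ∈ V0 F y) (hperp : v ∈ (Usub N R ⊓ V0 F y)ᗮ) :
    ‖v‖^2 ≤ 2 * (N:ℝ)^2 * ∑ n, (∑ r, v (r, n))^2 := by
  set c := corr F y v with hc
  have hw : v - c ∈ Usub N R ⊓ V0 F y := by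
    constructor
    · intro m
      have hsplit : ∑ r, (v - c) (r, m) = ∑ r, v (r, m) - ∑ r, c (r, m) := by
        rw [← Finset.sum_sub_distrib]; rfl
      rw [hsplit, hc, corr_colsum F y hF hv m, sub_self]
    · exact (V0 F y).sub_mem hv (corr_mem_V0 F y hF v)
  have h0 : ⟪v - c, v⟫ = 0 := hperp _ hw
  have h1 : ‖v‖^2 = ⟪c, v⟫ := by
    have h2 : ⟪v, v⟫ = ⟪v - c, v⟫ + ⟪c, v⟫ := by
      rw [← inner_add_left, sub_add_cancel]
    rw [← real_inner_self_eq_norm_sq, h2, h0, zero_add]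
  have h3 : ⟪c, v⟫ ≤ ‖c‖ * ‖v‖ := real_inner_le_norm c v
  have hcle : ‖c‖ ≤ Real.sqrt (2 * N) * ∑ n, |∑ r, v (r, n)| := corr_norm_le F y v
  have habs : (∑ n, |∑ r, v (r, n)|)^2 ≤ (N:ℝ) * ∑ n, (∑ r, v (r, n))^2 := by
    have := Finset.sum_mul_sq_le_sq_mul_sq univ (fun _ => (1:ℝ)) (fun n => |∑ r, v (r, n)|)
    simp only [one_mul, one_pow, sq_abs] at this
    calc (∑ n, |∑ r, v (r, n)|)^2 ≤ (∑ _n : Fin N, (1:ℝ)) * ∑ n, (∑ r, v (r, n))^2 := this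
      _ = (N:ℝ) * ∑ n, (∑ r, v (r, n))^2 := by simp
  by_cases hv0 : ‖v‖ = 0
  · rw [hv0]
    have hnn : (0:ℝ) ≤ ∑ n, (∑ r, v (r, n))^2 := Finset.sum_nonneg fun n _ => sq_nonneg _
    have h2N : (0:ℝ) ≤ 2 * (N:ℝ)^2 := by positivity
    nlinarith
  · have hvpos : 0 < ‖v‖ := lt_of_le_of_ne (norm_nonneg v) (Ne.symm hv0)
    have h4 : ‖v‖ ≤ ‖c‖ := by
      nlinarith
    have h5 : ‖v‖^2 ≤ ‖c‖^2 := by nlinarith [norm_nonneg c]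
    have h6 : ‖c‖^2 ≤ (Real.sqrt (2 * N))^2 * (∑ n, |∑ r, v (r, n)|)^2 := by
      have hrhs : 0 ≤ Real.sqrt (2 * N) * ∑ n, |∑ r, v (r, n)| := by
        apply mul_nonneg (Real.sqrt_nonneg _)
        exact Finset.sum_nonneg fun n _ => abs_nonneg _
      nlinarith [norm_nonneg c]
    have h7 : (Real.sqrt (2 * N))^2 = 2 * (N:ℝ) := Real.sq_sqrt (by positivity)
    calc ‖v‖^2 ≤ ‖c‖^2 := h5
      _ ≤ (2 * (N:ℝ)) * (∑ n, |∑ r, v (r, n)|)^2 := by rw [← h7]; exact h6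
      _ ≤ (2 * (N:ℝ)) * ((N:ℝ) * ∑ n, (∑ r, v (r, n))^2) := by
          apply mul_le_mul_of_nonneg_left habs (by positivity)
      _ = 2 * (N:ℝ)^2 * ∑ n, (∑ r, v (r, n))^2 := by ring

end Core
end Aux7

theorem stmt7 {N R : ℕ} (hR : 2 ≤ R)
    (F : Fin R → Finset (Fin N) → ℝ) (hF : ∀ r, IsSubmodular (F r))
    (x y : EuclideanSpace ℝ (Fin R × Fin N))
    (hx : (face (calA N R) x).Nonempty) (hy : (face (calB F) y).Nonempty) :
    friedrichs (aff0 (face (calA N R) x)) (aff0 (face (calB F) y)) ^ 2 ≤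
      1 - ((R : ℝ) - 1) / R * (2 / ((N : ℝ) ^ 2 * R ^ 2)) ∧
    1 - ((R : ℝ) - 1) / R * (2 / ((N : ℝ) ^ 2 * R ^ 2)) ≤
      1 - 1 / ((N : ℝ) ^ 2 * R ^ 2) := by
  have hR2 : (2:ℝ) ≤ (R:ℝ) := by exact_mod_cast hR
  have hRpos : (0:ℝ) < (R:ℝ) := by linarith
  set κ : ℝ := ((R : ℝ) - 1) / R * (2 / ((N : ℝ) ^ 2 * R ^ 2)) with hκdef
  have hκ_nonneg : 0 ≤ κ := by
    apply mul_nonneg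
    · apply div_nonneg <;> linarith
    · positivity
  have hκnum : κ * (2 * (N:ℝ)^2 * R) ≤ 1 := by
    rcases Nat.eq_zero_or_pos N with hN | hN
    · subst hN
      simp [hκdef]
    · have hN1 : (1:ℝ) ≤ (N:ℝ) := by exact_mod_cast hN
      have hNsq : (1:ℝ) ≤ (N:ℝ)^2 := by nlinarith
      have hexp : κ * (2 * (N:ℝ)^2 * R) = 4 * ((R:ℝ)-1) / R^2 := by
        rw [hκdef]
        field_simp
        ring
      rw [hexp, div_le_one (by positivity)]
      nlinarith [sq_nonneg ((R:ℝ)-2)]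
  have hκ_le_one : κ ≤ 1 := by
    rcases Nat.eq_zero_or_pos N with hN | hN
    · subst hN
      simp [hκdef]
    · have hN1 : (1:ℝ) ≤ (N:ℝ) := by exact_mod_cast hN
      have h1 : 1 ≤ 2 * (N:ℝ)^2 * R := by nlinarith
      nlinarith
  constructor
  · -- main inequality
    rw [Aux7.aff0_face_calA hx, Aux7.aff0_face_calB F y hy]
    set U := Aux7.Usub N R with hU
    set V := Aux7.V0 F y with hV
    show friedrichs U V ^ 2 ≤ 1 - κ
    unfold friedrichs
    set S := {t | ∃ u ∈ U ⊓ (U ⊓ V)ᗮ, ∃ v ∈ V ⊓ (U ⊓ V)ᗮ,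
      ‖u‖ ≤ 1 ∧ ‖v‖ ≤ 1 ∧ t = ⟪u, v⟫} with hS
    have h0S : (0:ℝ) ∈ S := by
      refine ⟨0, Submodule.zero_mem _, 0, Submodule.zero_mem _, ?_, ?_, ?_⟩
      · simp
      · simp
      · simp
    have hbound : ∀ t ∈ S, t ≤ Real.sqrt (1 - κ) := by
      rintro t ⟨u, hu, v, hv, hun, hvn, rfl⟩
      have huU : u ∈ Aux7.Usub N R := hu.1
      have hvV : v ∈ Aux7.V0 F y := hv.1
      have hvperp : v ∈ (Aux7.Usub N R ⊓ Aux7.V0 F y)ᗮ := hv.2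
      set s : Fin N → ℝ := fun n => ∑ r, v (r, n) with hs
      set Sq : ℝ := ∑ n, (s n)^2 with hSq
      have hSq_nonneg : 0 ≤ Sq := Finset.sum_nonneg fun n _ => sq_nonneg _
      set z : EuclideanSpace ℝ (Fin R × Fin N) := WithLp.toLp 2 (fun p => s p.2 / R) with hz
      have hz_apply : ∀ r n, z (r, n) = s n / R := fun r n => rfl
      -- ⟪u, z⟫ = 0
      have huz : ⟪u, z⟫ = 0 := by
        rw [Aux7.inner_eq, Fintype.sum_prod_type, Finset.sum_comm]
        apply Finset.sum_eq_zero
        intro n _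
        have : ∀ r : Fin R, u (r, n) * z (r, n) = u (r, n) * (s n / R) := fun r => rfl
        rw [Finset.sum_congr rfl (fun r _ => this r), ← Finset.sum_mul, huU n, zero_mul]
      -- ⟪v, z⟫ = Sq / R
      have hvz : ⟪v, z⟫ = Sq / R := by
        rw [Aux7.inner_eq, Fintype.sum_prod_type, Finset.sum_comm]
        rw [hSq, Finset.sum_div]
        apply Finset.sum_congr rfl
        intro n _
        have : ∀ r : Fin R, v (r, n) * z (r, n) = v (r, n) * (s n / R) := fun r => rfl
        rw [Finset.sum_congr rfl (fun r _ => this r), ← Finset.sum_mul]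
        rw [show ∑ r, v (r, n) = s n from rfl]
        ring
      -- ⟪z, z⟫ = Sq / R
      have hzz : ⟪z, z⟫ = Sq / R := by
        rw [Aux7.inner_eq, Fintype.sum_prod_type]
        have hrow : ∀ r : Fin R, ∑ n, z (r, n) * z (r, n) = Sq / (R^2) := by
          intro r
          rw [hSq, Finset.sum_div]
          apply Finset.sum_congr rfl
          intro n _
          rw [hz_apply]
          field_simp
        rw [Finset.sum_congr rfl (fun r _ => hrow r), Finset.sum_const, Finset.card_univ,
          Fintype.card_fin, nsmul_eq_mul]
        field_simp
      -- norm of v - z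
      have hvznorm : ‖v - z‖^2 = ‖v‖^2 - Sq / R := by
        rw [← real_inner_self_eq_norm_sq, ← real_inner_self_eq_norm_sq,
          real_inner_sub_sub_self, hvz, hzz]
        ring
      -- core inequality
      have hcore : ‖v‖^2 ≤ 2 * (N:ℝ)^2 * Sq := Aux7.core_ineq F y hF hvV hvperp
      -- t ≤ ‖v - z‖
      have ht1 : ⟪u, v⟫ = ⟪u, v - z⟫ := by rw [inner_sub_right, huz, sub_zero]
      have ht2 : ⟪u, v - z⟫ ≤ ‖u‖ * ‖v - z‖ := real_inner_le_norm u (v - z)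
      have ht3 : ‖u‖ * ‖v - z‖ ≤ ‖v - z‖ := by
        apply mul_le_of_le_one_left (norm_nonneg _) hun
      -- ‖v - z‖² ≤ 1 - κ
      have hκv : κ * ‖v‖^2 ≤ Sq / R := by
        have h1 : κ * ‖v‖^2 ≤ κ * (2 * (N:ℝ)^2 * Sq) :=
          mul_le_mul_of_nonneg_left hcore hκ_nonneg
        have h2 : κ * (2 * (N:ℝ)^2 * Sq) = (κ * (2 * (N:ℝ)^2 * R)) * (Sq / R) := by
          field_simp
        have h3 : (κ * (2 * (N:ℝ)^2 * R)) * (Sq / R) ≤ 1 * (Sq / R) := by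
          apply mul_le_mul_of_nonneg_right hκnum
          positivity
        linarith
      have hvsq : ‖v‖^2 ≤ 1 := by nlinarith [norm_nonneg v]
      have hvz_le : ‖v - z‖^2 ≤ 1 - κ := by
        rw [hvznorm]
        nlinarith
      have hfinal : ‖v - z‖ ≤ Real.sqrt (1 - κ) := by
        rw [← Real.sqrt_sq (norm_nonneg (v - z))]
        exact Real.sqrt_le_sqrt hvz_le
      calc ⟪u, v⟫ = ⟪u, v - z⟫ := ht1
        _ ≤ ‖u‖ * ‖v - z‖ := ht2
        _ ≤ ‖v - z‖ := ht3
        _ ≤ Real.sqrt (1 - κ) := hfinal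
    have hsup_le : sSup S ≤ Real.sqrt (1 - κ) :=
      Real.sSup_le hbound (Real.sqrt_nonneg _)
    have hsup_nonneg : 0 ≤ sSup S :=
      le_csSup ⟨Real.sqrt (1 - κ), fun t ht => hbound t ht⟩ h0S
    calc (sSup S)^2 ≤ (Real.sqrt (1 - κ))^2 := by
          apply pow_le_pow_left₀ hsup_nonneg hsup_le
      _ = 1 - κ := Real.sq_sqrt (by linarith)
  · -- second inequality
    rw [hκdef]
    rcases Nat.eq_zero_or_pos N with hN | hN
    · subst hN
      norm_num
    · have hN1 : (1:ℝ) ≤ (N:ℝ) := by exact_mod_cast hN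
      have hden : (0:ℝ) < (N:ℝ)^2 * R^2 := by positivity
      have key : 1 / ((N:ℝ)^2 * R^2) ≤ ((R:ℝ) - 1) / R * (2 / ((N:ℝ)^2 * R^2)) := by
        rw [div_mul_div_comm]
        rw [div_le_div_iff₀ hden (by positivity)]
        nlinarith
      linarith
end
end

section
/- Let U and V be linear subspaces of ℝ^D and let u ∈ U ∩ (U ∩ V)^⊥ with u ≠ 0. Then: (a) ‖Π_V u‖ ≤ c_F(U,V) ‖u‖; (b) κ(u) ≤ (1 − c_F(U,V)²)^{−1/2}; and (c) κ(u) = (1 − c_F(U,V)²)^{−1/2} if and only if ‖Π_V u‖ = c_F(U,V) ‖u‖. Here κ is taken with respect to P = U and Q = V, so that κ(u) = d(u, U ∩ V)/max{d(u,U), d(u,V)} = ‖u‖/d(u,V) = (1 − ‖Π_V u‖²/‖u‖²)^{−1/2}. -/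
open scoped RealInnerProductSpace
open Metric

noncomputable section

set_option maxHeartbeats 1000000 in
theorem stmt13 {D : ℕ} (U V : Submodule ℝ (EuclideanSpace ℝ (Fin D)))
    (u : EuclideanSpace ℝ (Fin D)) (hu : u ∈ U ⊓ (U ⊓ V)ᗮ) (hu0 : u ≠ 0)
    (κu : ℝ)
    (hκu : κu = infDist u ((U ⊓ V : Submodule ℝ (EuclideanSpace ℝ (Fin D))) :
        Set (EuclideanSpace ℝ (Fin D))) /
      max (infDist u (U : Set (EuclideanSpace ℝ (Fin D))))
        (infDist u (V : Set (EuclideanSpace ℝ (Fin D))))) :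
    ‖(Submodule.orthogonalProjection V u : EuclideanSpace ℝ (Fin D))‖ ≤ friedrichs U V * ‖u‖ ∧
    κu ≤ (Real.sqrt (1 - friedrichs U V ^ 2))⁻¹ ∧
    (κu = (Real.sqrt (1 - friedrichs U V ^ 2))⁻¹ ↔
      ‖(Submodule.orthogonalProjection V u : EuclideanSpace ℝ (Fin D))‖ = friedrichs U V * ‖u‖) := by
  classical
  obtain ⟨huU, huW⟩ := hu
  set c := friedrichs U V with hcdef
  set P : EuclideanSpace ℝ (Fin D) := (Submodule.orthogonalProjection V u : EuclideanSpace ℝ (Fin D)) with hPdef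
  have hr : (0:ℝ) < ‖u‖ := norm_pos_iff.2 hu0
  have hPV : P ∈ V := SetLike.coe_mem _
  have horth : u - P ∈ Vᗮ := Submodule.sub_starProjection_mem_orthogonal (K := V) u
  have hinner : ⟪u, P⟫ = ‖P‖ ^ 2 := by
    have h0 : ⟪P, u - P⟫ = 0 := (Submodule.mem_orthogonal V _).1 horth P hPV
    have h1 : ⟪u - P, P⟫ = 0 := by rw [real_inner_comm]; exact h0
    rw [inner_sub_left] at h1
    have h2 : ⟪P, P⟫ = ‖P‖ ^ 2 := real_inner_self_eq_norm_sq P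
    linarith
  have hpyth : ‖u - P‖ ^ 2 = ‖u‖ ^ 2 - ‖P‖ ^ 2 := by
    have := norm_sub_sq_real u P
    linarith
  have hPW : P ∈ (U ⊓ V)ᗮ := by
    rw [Submodule.mem_orthogonal]
    intro w hw
    have h1 : ⟪w, u⟫ = 0 := (Submodule.mem_orthogonal _ _).1 huW w hw
    have h2 : ⟪w, u - P⟫ = 0 := (Submodule.mem_orthogonal V _).1 horth w hw.2
    rw [inner_sub_right] at h2
    linarith
  have hune : u ≠ P := by
    intro h
    have huV : u ∈ V := h ▸ hPV
    have : ⟪u, u⟫ = 0 := (Submodule.mem_orthogonal _ _).1 huW u ⟨huU, huV⟩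
    exact hu0 (inner_self_eq_zero.1 this)
  have hb : (0:ℝ) < ‖u - P‖ := norm_pos_iff.2 (sub_ne_zero.2 hune)
  -- distances
  have hdU : infDist u (U : Set (EuclideanSpace ℝ (Fin D))) = 0 := infDist_zero_of_mem huU
  have hdV : infDist u (V : Set (EuclideanSpace ℝ (Fin D))) = ‖u - P‖ := by
    apply le_antisymm
    · have := infDist_le_dist_of_mem (x := u) hPV
      rwa [dist_eq_norm] at this
    · rw [infDist_eq_iInf]
      have : Nonempty (V : Set (EuclideanSpace ℝ (Fin D))) := ⟨⟨P, hPV⟩⟩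
      apply le_ciInf
      intro v
      rw [dist_eq_norm]
      have hvV : (v : EuclideanSpace ℝ (Fin D)) ∈ V := v.2
      have h0 : ⟪u - P, P - v⟫ = 0 := by
        have := (Submodule.mem_orthogonal V _).1 horth (P - (v : EuclideanSpace ℝ (Fin D))) (Submodule.sub_mem V hPV hvV)
        rw [real_inner_comm] at this; exact this
      have hsq : ‖u - (v : EuclideanSpace ℝ (Fin D))‖ ^ 2 = ‖u - P‖ ^ 2 + ‖P - (v : EuclideanSpace ℝ (Fin D))‖ ^ 2 := by
        have h1 : u - (v : EuclideanSpace ℝ (Fin D)) = (u - P) + (P - (v : EuclideanSpace ℝ (Fin D))) := by abel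
        rw [h1, norm_add_sq_real, h0]; ring
      have h2 : ‖u - P‖ ^ 2 ≤ ‖u - (v : EuclideanSpace ℝ (Fin D))‖ ^ 2 := by nlinarith [sq_nonneg ‖P - (v:EuclideanSpace ℝ (Fin D))‖]
      exact (pow_le_pow_iff_left₀ (norm_nonneg _) (norm_nonneg _) two_ne_zero).1 h2
  have hdUV : infDist u ((U ⊓ V : Submodule ℝ (EuclideanSpace ℝ (Fin D))) : Set (EuclideanSpace ℝ (Fin D))) = ‖u‖ := by
    apply le_antisymm
    · have := infDist_le_dist_of_mem (x := u) (Submodule.zero_mem (U ⊓ V))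
      rwa [dist_eq_norm, sub_zero] at this
    · rw [infDist_eq_iInf]
      have : Nonempty ((U ⊓ V : Submodule ℝ (EuclideanSpace ℝ (Fin D))) : Set (EuclideanSpace ℝ (Fin D))) := ⟨⟨0, Submodule.zero_mem _⟩⟩
      apply le_ciInf
      intro w
      rw [dist_eq_norm]
      have h0 : ⟪u, (w : EuclideanSpace ℝ (Fin D))⟫ = 0 := by
        have := (Submodule.mem_orthogonal _ _).1 huW (w : EuclideanSpace ℝ (Fin D)) w.2
        rw [real_inner_comm] at this; exact this
      have hsq : ‖u - (w : EuclideanSpace ℝ (Fin D))‖ ^ 2 = ‖u‖ ^ 2 + ‖(w : EuclideanSpace ℝ (Fin D))‖ ^ 2 := by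
        rw [norm_sub_sq_real, h0]; ring
      have h2 : ‖u‖ ^ 2 ≤ ‖u - (w : EuclideanSpace ℝ (Fin D))‖ ^ 2 := by nlinarith [sq_nonneg ‖(w:EuclideanSpace ℝ (Fin D))‖]
      exact (pow_le_pow_iff_left₀ (norm_nonneg _) (norm_nonneg _) two_ne_zero).1 h2
  have hκeq : κu = ‖u‖ / ‖u - P‖ := by
    rw [hκu, hdU, hdV, hdUV, max_eq_right hb.le]
  -- Friedrichs angle facts
  set S : Set ℝ := {t | ∃ x ∈ U ⊓ (U ⊓ V)ᗮ, ∃ y ∈ V ⊓ (U ⊓ V)ᗮ,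
    ‖x‖ ≤ 1 ∧ ‖y‖ ≤ 1 ∧ t = ⟪x, y⟫} with hSdef
  have hcS : c = sSup S := rfl
  have hSeq : S = (fun p : (EuclideanSpace ℝ (Fin D)) × (EuclideanSpace ℝ (Fin D)) => ⟪p.1, p.2⟫) ''
      ((((U ⊓ (U ⊓ V)ᗮ : Submodule ℝ (EuclideanSpace ℝ (Fin D))) : Set (EuclideanSpace ℝ (Fin D))) ∩ closedBall 0 1) ×ˢ
        (((V ⊓ (U ⊓ V)ᗮ : Submodule ℝ (EuclideanSpace ℝ (Fin D))) : Set (EuclideanSpace ℝ (Fin D))) ∩ closedBall 0 1)) := by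
    ext t
    constructor
    · rintro ⟨x, hx, y, hy, hnx, hny, rfl⟩
      exact ⟨(x, y), ⟨⟨hx, by simpa [mem_closedBall_zero_iff] using hnx⟩,
        ⟨hy, by simpa [mem_closedBall_zero_iff] using hny⟩⟩, rfl⟩
    · rintro ⟨⟨x, y⟩, ⟨⟨hx, hnx⟩, ⟨hy, hny⟩⟩, rfl⟩
      exact ⟨x, hx, y, hy, by simpa [mem_closedBall_zero_iff] using hnx,
        by simpa [mem_closedBall_zero_iff] using hny, rfl⟩
  have hScomp : IsCompact S := by
    rw [hSeq]
    apply IsCompact.image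
    · exact (((isCompact_closedBall (0 : EuclideanSpace ℝ (Fin D)) 1).inter_left
        (Submodule.closed_of_finiteDimensional _)).prod
        ((isCompact_closedBall (0 : EuclideanSpace ℝ (Fin D)) 1).inter_left
          (Submodule.closed_of_finiteDimensional _)))
    · exact continuous_inner
  have hS0 : (0:ℝ) ∈ S := ⟨0, Submodule.zero_mem _, 0, Submodule.zero_mem _, by
    simp, by simp, by simp⟩
  have hub : ∀ t ∈ S, t ≤ c := fun t ht => le_csSup hScomp.bddAbove ht
  have hc0 : 0 ≤ c := hub 0 hS0
  have hmem : c ∈ S := hScomp.sSup_mem ⟨0, hS0⟩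
  have hc1 : c < 1 := by
    obtain ⟨x, hx, y, hy, hnx, hny, hceq⟩ := hmem
    have hle1 : ‖x‖ * ‖y‖ ≤ 1 := mul_le_one₀ hnx (norm_nonneg y) hny
    rcases lt_or_eq_of_le (le_trans (real_inner_le_norm x y) hle1) with h | h
    · exact hceq ▸ h
    · exfalso
      have hxy : ‖x‖ * ‖y‖ = 1 :=
        le_antisymm hle1 (h ▸ real_inner_le_norm x y)
      have h1x : 1 ≤ ‖x‖ := by
        calc (1:ℝ) = ‖x‖ * ‖y‖ := hxy.symm
          _ ≤ ‖x‖ * 1 := mul_le_mul_of_nonneg_left hny (norm_nonneg x)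
          _ = ‖x‖ := mul_one _
      have hnx1 : ‖x‖ = 1 := le_antisymm hnx h1x
      have h1y : 1 ≤ ‖y‖ := by
        calc (1:ℝ) = ‖x‖ * ‖y‖ := hxy.symm
          _ ≤ 1 * ‖y‖ := mul_le_mul_of_nonneg_right hnx (norm_nonneg y)
          _ = ‖y‖ := one_mul _
      have hny1 : ‖y‖ = 1 := le_antisymm hny h1y
      have hxeqy : x = y := (inner_eq_one_iff_of_norm_eq_one hnx1 hny1).1 h
      have hxUV : x ∈ U ⊓ V := ⟨hx.1, hxeqy ▸ hy.1⟩
      have : ⟪x, x⟫ = 0 := by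
        have := (Submodule.mem_orthogonal _ _).1 hx.2 x hxUV
        rwa [real_inner_comm] at this
      have : x = 0 := inner_self_eq_zero.1 this
      rw [this] at hnx1; simp at hnx1
  -- part (a)
  have parta : ‖P‖ ≤ c * ‖u‖ := by
    by_cases hP0 : P = 0
    · rw [hP0]; simpa using mul_nonneg hc0 hr.le
    · have ha : (0:ℝ) < ‖P‖ := norm_pos_iff.2 hP0
      have hxm : ‖u‖⁻¹ • u ∈ U ⊓ (U ⊓ V)ᗮ := Submodule.smul_mem _ _ ⟨huU, huW⟩
      have hym : ‖P‖⁻¹ • P ∈ V ⊓ (U ⊓ V)ᗮ := Submodule.smul_mem _ _ ⟨hPV, hPW⟩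
      have hnx : ‖‖u‖⁻¹ • u‖ ≤ 1 := by
        rw [norm_smul, norm_inv, norm_norm, inv_mul_cancel₀ hr.ne']
      have hny : ‖‖P‖⁻¹ • P‖ ≤ 1 := by
        rw [norm_smul, norm_inv, norm_norm, inv_mul_cancel₀ ha.ne']
      have htS : ⟪‖u‖⁻¹ • u, ‖P‖⁻¹ • P⟫ ∈ S := ⟨_, hxm, _, hym, hnx, hny, rfl⟩
      have hle := hub _ htS
      rw [real_inner_smul_left, real_inner_smul_right, hinner] at hle
      have : ‖P‖ / ‖u‖ ≤ c := by
        have hexp : ‖u‖⁻¹ * (‖P‖⁻¹ * ‖P‖ ^ 2) = ‖P‖ / ‖u‖ := by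
          field_simp
        rwa [hexp] at hle
      calc ‖P‖ = (‖P‖ / ‖u‖) * ‖u‖ := by field_simp
        _ ≤ c * ‖u‖ := mul_le_mul_of_nonneg_right this hr.le
  -- arithmetic setup for (b), (c)
  set s : ℝ := Real.sqrt (1 - c ^ 2) with hsdef
  have hs2 : s ^ 2 = 1 - c ^ 2 := Real.sq_sqrt (by nlinarith)
  have hs0 : 0 < s := Real.sqrt_pos.2 (by nlinarith)
  have hbge : s * ‖u‖ ≤ ‖u - P‖ := by
    have h1 : (s * ‖u‖) ^ 2 ≤ ‖u - P‖ ^ 2 := by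
      have : ‖P‖ ^ 2 ≤ c ^ 2 * ‖u‖ ^ 2 := by nlinarith [norm_nonneg P]
      nlinarith
    exact (pow_le_pow_iff_left₀ (mul_nonneg hs0.le hr.le) (norm_nonneg _) two_ne_zero).1 h1
  refine ⟨parta, ?_, ?_⟩
  · rw [hκeq, inv_eq_one_div, div_le_div_iff₀ hb hs0]
    nlinarith
  · constructor
    · intro heq
      rw [hκeq, inv_eq_one_div, div_eq_div_iff hb.ne' hs0.ne'] at heq
      have hbeq : ‖u - P‖ = s * ‖u‖ := by nlinarith
      have h2 : ‖P‖ ^ 2 = (c * ‖u‖) ^ 2 := by nlinarith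
      calc ‖P‖ = Real.sqrt (‖P‖ ^ 2) := (Real.sqrt_sq (norm_nonneg _)).symm
        _ = Real.sqrt ((c * ‖u‖) ^ 2) := by rw [h2]
        _ = c * ‖u‖ := Real.sqrt_sq (mul_nonneg hc0 hr.le)
    · intro heq
      have hbeq2 : ‖u - P‖ ^ 2 = (s * ‖u‖) ^ 2 := by
        rw [hpyth, heq]; nlinarith
      have hbeq : ‖u - P‖ = s * ‖u‖ := by
        calc ‖u - P‖ = Real.sqrt (‖u - P‖ ^ 2) := (Real.sqrt_sq (norm_nonneg _)).symm
          _ = Real.sqrt ((s * ‖u‖) ^ 2) := by rw [hbeq2]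
          _ = s * ‖u‖ := Real.sqrt_sq (mul_nonneg hs0.le hr.le)
      rw [hκeq, hbeq]
      field_simp
end
end

section
/- Let U and V be linear subspaces of ℝ^D with U ⊄ V and V ⊄ U. Then there exists a nonzero point u_0 ∈ U ∩ (U ∩ V)^⊥ such that the alternating-projection sequences u_k and v_k between U and V started at u_0 (v_k = Π_V u_k, u_{k+1} = Π_U v_k) satisfy ‖u_k‖ = c_F(U,V)^{2k} ‖u_0‖ and ‖v_k‖ = c_F(U,V)^{2k} ‖v_0‖ for all k. -/
open scoped RealInnerProductSpace
open Metric

noncomputable section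

set_option maxHeartbeats 1000000 in
theorem stmt14 {D : ℕ} (U V : Submodule ℝ (EuclideanSpace ℝ (Fin D)))
    (hUV : ¬U ≤ V) (hVU : ¬V ≤ U) :
    ∃ u0 ∈ U ⊓ (U ⊓ V)ᗮ, u0 ≠ 0 ∧
      ∀ u v : ℕ → EuclideanSpace ℝ (Fin D), u 0 = u0 →
        (∀ k, v k = (V.orthogonalProjectionOnto (u k) : EuclideanSpace ℝ (Fin D))) →
        (∀ k, u (k + 1) = (U.orthogonalProjectionOnto (v k) : EuclideanSpace ℝ (Fin D))) →
        ∀ k, ‖u k‖ = friedrichs U V ^ (2 * k) * ‖u 0‖ ∧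
          ‖v k‖ = friedrichs U V ^ (2 * k) * ‖v 0‖ := by
  classical
  set H := EuclideanSpace ℝ (Fin D)
  set W : Submodule ℝ H := U ⊓ (U ⊓ V)ᗮ with hWdef
  -- W is nontrivial
  have hWne : ∃ x : H, x ∈ W ∧ x ≠ 0 := by
    by_contra h
    push_neg at h
    apply hUV
    intro x hxU
    have hmem : x - (Submodule.orthogonalProjectionOnto (U ⊓ V) x : H) ∈ W :=
      ⟨Submodule.sub_mem _ hxU (Submodule.orthogonalProjectionOnto (U ⊓ V) x).2.1,
        Submodule.sub_starProjection_mem_orthogonal (K := U ⊓ V) x⟩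
    have h0 := h _ hmem
    have hx : x = (Submodule.orthogonalProjectionOnto (U ⊓ V) x : H) := by
      rwa [sub_eq_zero] at h0
    rw [hx]
    exact (Submodule.orthogonalProjectionOnto (U ⊓ V) x).2.2
  clear hUV hVU
  -- projections preserve (U ⊓ V)ᗮ
  have hPmem : ∀ x : H, x ∈ (U ⊓ V)ᗮ →
      (Submodule.orthogonalProjectionOnto V x : H) ∈ (U ⊓ V)ᗮ := by
    intro x hx
    rw [Submodule.mem_orthogonal]
    intro z hz
    rw [← Submodule.starProjection_apply, ← Submodule.inner_starProjection_left_eq_right,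
      (Submodule.starProjection_eq_self_iff (K := V)).mpr hz.2]
    exact (Submodule.mem_orthogonal _ _).mp hx z hz
  have hQmem : ∀ x : H, x ∈ (U ⊓ V)ᗮ →
      (Submodule.orthogonalProjectionOnto U x : H) ∈ (U ⊓ V)ᗮ := by
    intro x hx
    rw [Submodule.mem_orthogonal]
    intro z hz
    rw [← Submodule.starProjection_apply, ← Submodule.inner_starProjection_left_eq_right,
      (Submodule.starProjection_eq_self_iff (K := U)).mpr hz.1]
    exact (Submodule.mem_orthogonal _ _).mp hx z hz
  -- inner with projection is norm squared
  have hPinner : ∀ x : H, ⟪x, (Submodule.orthogonalProjectionOnto V x : H)⟫ =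
      ‖(Submodule.orthogonalProjectionOnto V x : H)‖ ^ 2 := by
    intro x
    have h3 : ⟪x - (Submodule.orthogonalProjectionOnto V x : H), (Submodule.orthogonalProjectionOnto V x : H)⟫ = 0 :=
      Submodule.starProjection_inner_eq_zero (K := V) x _ (Submodule.orthogonalProjectionOnto V x).2
    rw [inner_sub_left] at h3
    have h4 := real_inner_self_eq_norm_sq ((Submodule.orthogonalProjectionOnto V x : H))
    linear_combination h3 + h4
  -- the compressed operator on W
  have hfmem : ∀ w : W, (Submodule.orthogonalProjectionOnto U
      ((Submodule.orthogonalProjectionOnto V (w : H)) : H) : H) ∈ W := by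
    intro w
    exact ⟨(Submodule.orthogonalProjectionOnto U _).2, hQmem _ (hPmem _ w.2.2)⟩
  let f : W →ₗ[ℝ] W :=
    { toFun := fun w => ⟨(Submodule.orthogonalProjectionOnto U
        ((Submodule.orthogonalProjectionOnto V (w : H)) : H) : H), hfmem w⟩
      map_add' := by
        intro a b
        apply Subtype.ext
        simp [map_add]
      map_smul' := by
        intro c a
        apply Subtype.ext
        simp [map_smul] }
  let T : W →L[ℝ] W := LinearMap.toContinuousLinearMap f
  have hTapply : ∀ w : W, ((T w : W) : H) = (Submodule.orthogonalProjectionOnto U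
      ((Submodule.orthogonalProjectionOnto V (w : H)) : H) : H) := fun w => rfl
  have hTinner : ∀ a b : W, ⟪((T a : W) : H), (b : H)⟫ =
      ⟪(a : H), (Submodule.orthogonalProjectionOnto V (b : H) : H)⟫ := by
    intro a b
    rw [hTapply]
    simp only [← Submodule.starProjection_apply]
    rw [Submodule.inner_starProjection_left_eq_right,
      (Submodule.starProjection_eq_self_iff (K := U)).mpr b.2.1,
      Submodule.inner_starProjection_left_eq_right]
  have hT : IsSelfAdjoint T := by
    rw [ContinuousLinearMap.isSelfAdjoint_iff_isSymmetric]
    intro a b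
    show (inner ℝ (T a) b : ℝ) = inner ℝ a (T b)
    have h1 : (inner ℝ (T a) b : ℝ) = ⟪((T a : W) : H), (b : H)⟫ := rfl
    have h2 : (inner ℝ a (T b) : ℝ) = ⟪((a : W) : H), ((T b : W) : H)⟫ := rfl
    have h5 : ⟪((a : W) : H), ((T b : W) : H)⟫ =
        ⟪(a : H), (Submodule.orthogonalProjectionOnto V (b : H) : H)⟫ := by
      rw [real_inner_comm, hTinner b a]
      simp only [← Submodule.starProjection_apply]
      rw [← Submodule.inner_starProjection_left_eq_right,
        real_inner_comm]
    rw [h1, h2, hTinner a b, h5]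
  -- the Rayleigh quotient values
  have hg : ∀ w : W, T.reApplyInnerSelf w =
      ‖(Submodule.orthogonalProjectionOnto V (w : H) : H)‖ ^ 2 := by
    intro w
    have h0 : T.reApplyInnerSelf w = ⟪((T w : W) : H), (w : H)⟫ := rfl
    rw [h0, hTinner w w, hPinner]
  obtain ⟨w, hwW, hw0⟩ := hWne
  have hw'0 : (⟨w, hwW⟩ : W) ≠ 0 := by
    simp [Subtype.ext_iff, hw0]
  have hsne : (sphere (0 : W) 1).Nonempty := by
    refine ⟨‖(⟨w, hwW⟩ : W)‖⁻¹ • ⟨w, hwW⟩, ?_⟩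
    rw [mem_sphere_zero_iff_norm, norm_smul, norm_inv, norm_norm,
      inv_mul_cancel₀ (norm_ne_zero_iff.mpr hw'0)]
  obtain ⟨x₀, hx₀mem, hmax⟩ := (isCompact_sphere (0 : W) 1).exists_isMaxOn hsne
    T.reApplyInnerSelf_continuous.continuousOn
  have hx₀norm : ‖x₀‖ = 1 := mem_sphere_zero_iff_norm.mp hx₀mem
  have hx₀ne : x₀ ≠ 0 := by
    intro h; rw [h, norm_zero] at hx₀norm; norm_num at hx₀norm
  set lam : ℝ := T.reApplyInnerSelf x₀ with hlamdef
  have hlam_eq : lam = ‖(Submodule.orthogonalProjectionOnto V ((x₀ : W) : H) : H)‖ ^ 2 := hg x₀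
  have hlam_nonneg : 0 ≤ lam := by rw [hlam_eq]; positivity
  -- x₀ is an eigenvector
  have hextr : IsLocalExtrOn T.reApplyInnerSelf (sphere (0 : W) ‖x₀‖) x₀ := by
    rw [hx₀norm]; exact Or.inr hmax.localize
  have hray : T.rayleighQuotient x₀ = lam := by
    rw [ContinuousLinearMap.rayleighQuotient, hx₀norm]
    simp [hlamdef]
  have heig : T x₀ = lam • x₀ := by
    have h := hT.eq_smul_self_of_isLocalExtrOn hextr
    rw [hray] at h
    simpa using h
  have heigH : (Submodule.orthogonalProjectionOnto U
      ((Submodule.orthogonalProjectionOnto V ((x₀ : W) : H)) : H) : H) = lam • ((x₀ : W) : H) := by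
    have h6 := congrArg (fun z : W => (z : H)) heig
    simpa [hTapply] using h6
  -- upper bound for the projection norm
  have hub : ∀ y : W, ‖y‖ ≤ 1 → ‖(Submodule.orthogonalProjectionOnto V ((y : W) : H) : H)‖ ^ 2 ≤ lam := by
    intro y hy
    by_cases h0 : y = 0
    · simp only [h0]
      simpa using hlam_nonneg
    · have hyn : ‖y‖ ≠ 0 := norm_ne_zero_iff.mpr h0
      have hmemS : (‖y‖⁻¹ • y) ∈ sphere (0 : W) 1 := by
        rw [mem_sphere_zero_iff_norm, norm_smul, norm_inv, norm_norm,
          inv_mul_cancel₀ hyn]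
      have h1 : T.reApplyInnerSelf (‖y‖⁻¹ • y) ≤ lam := hmax hmemS
      rw [T.reApplyInnerSelf_smul, hg] at h1
      have h2 : ‖(‖y‖⁻¹ : ℝ)‖ = ‖y‖⁻¹ := by
        rw [Real.norm_eq_abs, abs_of_nonneg (by positivity)]
      rw [h2] at h1
      have hysq : ‖y‖ ^ 2 ≤ 1 := by nlinarith [norm_nonneg y]
      calc ‖(Submodule.orthogonalProjectionOnto V ((y : W) : H) : H)‖ ^ 2
          = ‖y‖ ^ 2 * ((‖y‖⁻¹) ^ 2 * ‖(Submodule.orthogonalProjectionOnto V ((y : W) : H) : H)‖ ^ 2) := by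
            rw [← mul_assoc, ← mul_pow, mul_inv_cancel₀ hyn, one_pow, one_mul]
        _ ≤ 1 * lam := by
            apply mul_le_mul hysq h1 (by positivity) zero_le_one
        _ = lam := one_mul _
  set c : ℝ := Real.sqrt lam with hcdef
  have hc2 : c ^ 2 = lam := Real.sq_sqrt hlam_nonneg
  have hcnn : (0:ℝ) ≤ c := Real.sqrt_nonneg lam
  have hnormP : ∀ y : W, ‖y‖ ≤ 1 → ‖(Submodule.orthogonalProjectionOnto V ((y : W) : H) : H)‖ ≤ c := by
    intro y hy
    have h1 := hub y hy
    nlinarith [norm_nonneg ((Submodule.orthogonalProjectionOnto V ((y : W) : H) : H))]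
  -- the set defining the Friedrichs angle
  have hSub : ∀ t : ℝ, (∃ u ∈ U ⊓ (U ⊓ V)ᗮ, ∃ v ∈ V ⊓ (U ⊓ V)ᗮ,
      ‖u‖ ≤ 1 ∧ ‖v‖ ≤ 1 ∧ t = ⟪u, v⟫) → t ≤ c := by
    rintro t ⟨u', hu', v', hv', hun, hvn, rfl⟩
    have h3 : ⟪v', u' - (Submodule.orthogonalProjectionOnto V u' : H)⟫ = 0 :=
      (Submodule.mem_orthogonal _ _).mp (Submodule.sub_starProjection_mem_orthogonal (K := V) u') v' hv'.1
    rw [inner_sub_right] at h3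
    have h4 : ⟪u', v'⟫ = ⟪(Submodule.orthogonalProjectionOnto V u' : H), v'⟫ := by
      have c1 := real_inner_comm u' v'
      have c2 := real_inner_comm ((Submodule.orthogonalProjectionOnto V u' : H)) v'
      linear_combination h3 - c1 + c2
    rw [h4]
    calc ⟪(Submodule.orthogonalProjectionOnto V u' : H), v'⟫
        ≤ ‖(Submodule.orthogonalProjectionOnto V u' : H)‖ * ‖v'‖ := real_inner_le_norm _ _
      _ ≤ c * 1 := mul_le_mul (hnormP ⟨u', hu'⟩ hun) hvn (norm_nonneg _) hcnn
      _ = c := mul_one _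
  have hx₀coe_norm : ‖((x₀ : W) : H)‖ = 1 := hx₀norm
  have hcS : ∃ u ∈ U ⊓ (U ⊓ V)ᗮ, ∃ v ∈ V ⊓ (U ⊓ V)ᗮ,
      ‖u‖ ≤ 1 ∧ ‖v‖ ≤ 1 ∧ c = ⟪u, v⟫ := by
    by_cases hc0 : c = 0
    · refine ⟨((x₀ : W) : H), x₀.2, 0, Submodule.zero_mem _, ?_, ?_, ?_⟩
      · rw [hx₀coe_norm]
      · simp
      · rw [inner_zero_right, hc0]
    · have hcpos : 0 < c := lt_of_le_of_ne hcnn (Ne.symm hc0)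
      have hPx₀ : ‖(Submodule.orthogonalProjectionOnto V ((x₀ : W) : H) : H)‖ = c := by
        rw [hcdef, hlam_eq, Real.sqrt_sq (norm_nonneg _)]
      refine ⟨((x₀ : W) : H), x₀.2,
        c⁻¹ • (Submodule.orthogonalProjectionOnto V ((x₀ : W) : H) : H), ?_, ?_, ?_, ?_⟩
      · exact Submodule.smul_mem _ _
          ⟨(Submodule.orthogonalProjectionOnto V _).2, hPmem _ x₀.2.2⟩
      · rw [hx₀coe_norm]
      · rw [norm_smul, norm_inv, Real.norm_eq_abs, abs_of_pos hcpos, hPx₀,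
          inv_mul_cancel₀ hc0]
      · rw [real_inner_smul_right, hPinner, ← hlam_eq, ← hc2]
        field_simp
  have hfc : friedrichs U V = c := by
    unfold friedrichs
    exact le_antisymm (csSup_le ⟨c, hcS⟩ (fun t ht => hSub t ht))
      (le_csSup ⟨c, fun t ht => hSub t ht⟩ hcS)
  -- conclude
  refine ⟨((x₀ : W) : H), x₀.2, ?_, ?_⟩
  · simpa using hx₀ne
  · intro u v hu0 hv hu k
    have hu_eq : ∀ k, u k = lam ^ k • ((x₀ : W) : H) := by
      intro k
      induction k with
      | zero => simpa using hu0
      | succ n ih =>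
        rw [hu n, hv n, ih, map_smul]
        push_cast
        rw [map_smul]
        push_cast
        rw [heigH, smul_smul, ← pow_succ]
    have hv_eq : ∀ k, v k = lam ^ k • v 0 := by
      intro k
      rw [hv k, hv 0, hu_eq k, hu0, map_smul]
      push_cast
      rfl
    have hpow : friedrichs U V ^ (2 * k) = lam ^ k := by
      rw [hfc, pow_mul, hc2]
    constructor
    · rw [hu_eq k, hu0, hpow, norm_smul, Real.norm_eq_abs,
        abs_of_nonneg (pow_nonneg hlam_nonneg k)]
    · rw [hv_eq k, hpow, norm_smul, Real.norm_eq_abs,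
        abs_of_nonneg (pow_nonneg hlam_nonneg k)]
end
end

section
/- Let F₁, …, F_R be submodular functions on a ground set V of N elements with F_r(∅) = 0, and let F = Σ_r F_r with Lovász extension f. If (a*, b*) minimizes ‖a − b‖² over (a,b) ∈ 𝒜 × ℬ, then the point x* = −Σ_{r=1}^R (b*)_r is the (unique) minimizer over x ∈ ℝ^N of f(x) + ½‖x‖². -/
open scoped RealInnerProductSpace
open Finset

noncomputable section

/-- `y` is the nearest-point projection of `x` onto `C`. -/
def IsProjOn {X : Type*} [MetricSpace X] (C : Set X) (x y : X) : Prop :=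
  y ∈ C ∧ ∀ z ∈ C, dist x y ≤ dist x z

/-- The Lovász extension `f(x) = max_{s ∈ B(F)} sᵀx` of a set function. -/
def lovasz {N : ℕ} (F : Finset (Fin N) → ℝ) (x : EuclideanSpace ℝ (Fin N)) : ℝ :=
  sSup {t | ∃ s ∈ basePolytope F, t = ⟪s, x⟫}

/-- chain set S_k -/
def chainS {N : ℕ} (σ : Equiv.Perm (Fin N)) (k : ℕ) : Finset (Fin N) :=
  univ.filter (fun n => (σ.symm n : ℕ) < k)

lemma chainS_zero {N : ℕ} (σ : Equiv.Perm (Fin N)) : chainS σ 0 = ∅ := by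
  simp [chainS]

lemma chainS_top {N : ℕ} (σ : Equiv.Perm (Fin N)) {k : ℕ} (hk : N ≤ k) :
    chainS σ k = univ := by
  ext n; simp [chainS]; exact lt_of_lt_of_le (σ.symm n).isLt hk

lemma mem_chainS {N : ℕ} {σ : Equiv.Perm (Fin N)} {k : ℕ} {n : Fin N} :
    n ∈ chainS σ k ↔ (σ.symm n : ℕ) < k := by simp [chainS]

lemma chainS_succ {N : ℕ} (σ : Equiv.Perm (Fin N)) {k : ℕ} (hk : k < N) :
    chainS σ (k + 1) = insert (σ ⟨k, hk⟩) (chainS σ k) := by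
  ext n
  simp only [mem_chainS, mem_insert, Nat.lt_succ_iff_lt_or_eq]
  constructor
  · rintro (h | h)
    · exact Or.inr h
    · left
      have : σ.symm n = ⟨k, hk⟩ := Fin.ext h
      rw [← this, Equiv.apply_symm_apply]
  · rintro (h | h)
    · right; rw [h]; simp
    · exact Or.inl h

lemma sigma_not_mem_chainS {N : ℕ} (σ : Equiv.Perm (Fin N)) {k : ℕ} (hk : k < N) :
    σ ⟨k, hk⟩ ∉ chainS σ k := by
  simp [mem_chainS]

/-- greedy vector -/
def greedy {N : ℕ} (F : Finset (Fin N) → ℝ) (σ : Equiv.Perm (Fin N)) (n : Fin N) : ℝ :=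
  F (chainS σ ((σ.symm n : ℕ) + 1)) - F (chainS σ (σ.symm n))

lemma greedy_apply {N : ℕ} (F : Finset (Fin N) → ℝ) (σ : Equiv.Perm (Fin N)) {k : ℕ}
    (hk : k < N) :
    greedy F σ (σ ⟨k, hk⟩) = F (chainS σ (k + 1)) - F (chainS σ k) := by
  simp [greedy]

lemma sum_greedy_inter {N : ℕ} {F : Finset (Fin N) → ℝ} (hF : IsSubmodular F)
    (σ : Equiv.Perm (Fin N)) (k : ℕ) (A : Finset (Fin N)) :
    ∑ n ∈ A ∩ chainS σ k, greedy F σ n ≤ F (A ∩ chainS σ k) := by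
  induction k with
  | zero => simp [chainS_zero, hF.1]
  | succ k ih =>
    by_cases hk : k < N
    · rw [chainS_succ σ hk]
      set a := σ ⟨k, hk⟩ with ha
      by_cases hA : a ∈ A
      · have hnot : a ∉ A ∩ chainS σ k := fun h => sigma_not_mem_chainS σ hk (mem_inter.mp h).2
        have hins : A ∩ insert a (chainS σ k) = insert a (A ∩ chainS σ k) := by
          ext n; simp only [mem_inter, mem_insert]
          constructor
          · rintro ⟨h1, (h2 | h2)⟩
            · exact Or.inl h2
            · exact Or.inr ⟨h1, h2⟩
          · rintro (h | ⟨h1, h2⟩)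
            · exact ⟨h ▸ hA, Or.inl h⟩
            · exact ⟨h1, Or.inr h2⟩
        rw [hins, Finset.sum_insert hnot]
        have hsub : F (chainS σ (k+1)) + F (A ∩ chainS σ k)
            ≤ F (insert a (A ∩ chainS σ k)) + F (chainS σ k) := by
          have h2 := hF.2 (insert a (A ∩ chainS σ k)) (chainS σ k)
          have hu : insert a (A ∩ chainS σ k) ∪ chainS σ k = chainS σ (k+1) := by
            rw [chainS_succ σ hk, Finset.insert_union]
            congr 1
            exact Finset.union_eq_right.mpr (Finset.inter_subset_right)
          have hi : insert a (A ∩ chainS σ k) ∩ chainS σ k = A ∩ chainS σ k := by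
            rw [Finset.insert_inter_of_notMem (sigma_not_mem_chainS σ hk)]
            exact Finset.inter_eq_left.mpr Finset.inter_subset_right
          rw [hu, hi] at h2
          exact h2
        have := greedy_apply F σ hk
        rw [← ha] at this
        rw [this]
        linarith [ih]
      · have hins : A ∩ insert a (chainS σ k) = A ∩ chainS σ k := by
          ext n; simp only [mem_inter, mem_insert]
          constructor
          · rintro ⟨h1, (h2 | h2)⟩
            · exact absurd (h2 ▸ h1) hA
            · exact ⟨h1, h2⟩
          · rintro ⟨h1, h2⟩; exact ⟨h1, Or.inr h2⟩
        rw [hins]; exact ih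
    · push_neg at hk
      have : chainS σ (k+1) = chainS σ k := by
        rw [chainS_top σ hk, chainS_top σ (le_trans hk (Nat.le_succ k))]
      rw [this]; exact ih

lemma sum_greedy_chain {N : ℕ} {F : Finset (Fin N) → ℝ} (hF0 : F ∅ = 0)
    (σ : Equiv.Perm (Fin N)) (k : ℕ) :
    ∑ n ∈ chainS σ k, greedy F σ n = F (chainS σ k) := by
  induction k with
  | zero => simp [chainS_zero, hF0]
  | succ k ih =>
    by_cases hk : k < N
    · rw [chainS_succ σ hk, Finset.sum_insert (sigma_not_mem_chainS σ hk),
        greedy_apply F σ hk, ih, ← chainS_succ σ hk]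
      ring
    · push_neg at hk
      have : chainS σ (k+1) = chainS σ k := by
        rw [chainS_top σ hk, chainS_top σ (le_trans hk (Nat.le_succ k))]
      rw [this]; exact ih

lemma greedy_mem_basePolytope {N : ℕ} {F : Finset (Fin N) → ℝ} (hF : IsSubmodular F)
    (σ : Equiv.Perm (Fin N)) :
    (WithLp.toLp 2 (greedy F σ) : EuclideanSpace ℝ (Fin N)) ∈ basePolytope F := by
  constructor
  · intro A
    have := sum_greedy_inter hF σ N A
    rwa [chainS_top σ le_rfl, Finset.inter_univ] at this
  · have := sum_greedy_chain hF.1 σ N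
    rwa [chainS_top σ le_rfl] at this

lemma inner_le_greedy {N : ℕ} {F : Finset (Fin N) → ℝ} (hF0 : F ∅ = 0)
    {x : EuclideanSpace ℝ (Fin N)} {σ : Equiv.Perm (Fin N)}
    (hsort : ∀ i j : Fin N, i ≤ j → x (σ j) ≤ x (σ i))
    {s : EuclideanSpace ℝ (Fin N)} (hs : s ∈ basePolytope F) :
    ∑ n, s n * x n ≤ ∑ n, greedy F σ n * x n := by
  rcases Nat.eq_zero_or_pos N with hN | hN
  · subst hN; simp
  have hmin : ∀ k : ℕ, min k (N - 1) < N := fun k => by omega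
  set c : ℕ → ℝ := fun k => x (σ ⟨min k (N-1), hmin k⟩) with hc
  have hcmono : ∀ k : ℕ, c (k+1) ≤ c k := by
    intro k
    apply hsort
    exact Fin.mk_le_mk.mpr (min_le_min (Nat.le_succ k) le_rfl)
  have Q : ∀ k : ℕ, (F (chainS σ k) - ∑ n ∈ chainS σ k, s n) * c k
      ≤ ∑ n ∈ chainS σ k, (greedy F σ n - s n) * x n := by
    intro k
    induction k with
    | zero => simp [chainS_zero, hF0]
    | succ k ih =>
      by_cases hk : k < N
      · have hmk : (⟨min k (N-1), hmin k⟩ : Fin N) = ⟨k, hk⟩ := by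
          apply Fin.ext
          show min k (N-1) = k
          omega
        have hxa : x (σ ⟨k, hk⟩) = c k := by
          simp only [hc]
          exact congrArg x (congrArg σ hmk.symm)
        rw [chainS_succ σ hk, Finset.sum_insert (sigma_not_mem_chainS σ hk),
          Finset.sum_insert (sigma_not_mem_chainS σ hk), greedy_apply F σ hk,
          ← chainS_succ σ hk, hxa]
        have feas := hs.1 (chainS σ (k+1))
        have hfac : (F (chainS σ (k+1)) - ∑ n ∈ chainS σ (k+1), s n) * c (k+1)
            ≤ (F (chainS σ (k+1)) - ∑ n ∈ chainS σ (k+1), s n) * c k :=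
          mul_le_mul_of_nonneg_left (hcmono k) (by linarith)
        have hsplit : ∑ n ∈ chainS σ (k+1), s n
            = s (σ ⟨k, hk⟩) + ∑ n ∈ chainS σ k, s n := by
          rw [chainS_succ σ hk, Finset.sum_insert (sigma_not_mem_chainS σ hk)]
        rw [hsplit] at hfac feas
        nlinarith [ih]
      · push_neg at hk
        have h1 : chainS σ (k+1) = chainS σ k := by
          rw [chainS_top σ hk, chainS_top σ (le_trans hk (Nat.le_succ k))]
        have hmk : (⟨min (k+1) (N-1), hmin (k+1)⟩ : Fin N) = ⟨min k (N-1), hmin k⟩ := by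
          apply Fin.ext
          show min (k+1) (N-1) = min k (N-1)
          omega
        have h2 : c (k+1) = c k := by
          simp only [hc]
          exact congrArg x (congrArg σ hmk)
        rw [h1, h2]; exact ih
  have := Q N
  rw [chainS_top σ le_rfl, hs.2, sub_self, zero_mul] at this
  have h3 : ∑ n, (greedy F σ n - s n) * x n
      = ∑ n, greedy F σ n * x n - ∑ n, s n * x n := by
    rw [← Finset.sum_sub_distrib]
    congr 1; ext n; ring
  linarith [h3 ▸ this]

lemma inner_eq_sum {ι : Type*} [Fintype ι] (s z : EuclideanSpace ℝ ι) :
    ⟪s, z⟫ = ∑ i, s i * z i := by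
  rw [PiLp.inner_apply]; simp [RCLike.inner_apply, mul_comm]

lemma norm_sq_eq_sum {ι : Type*} [Fintype ι] (v : EuclideanSpace ℝ ι) :
    ‖v‖ ^ 2 = ∑ i, v i ^ 2 := by
  rw [← real_inner_self_eq_norm_sq, PiLp.inner_apply]; simp [RCLike.inner_apply, sq]

theorem stmt18 {N R : ℕ}
    (F : Fin R → Finset (Fin N) → ℝ) (hF : ∀ r, IsSubmodular (F r))
    (Fsum : Finset (Fin N) → ℝ) (hFsum : ∀ A, Fsum A = ∑ r, F r A)
    (astar bstar : EuclideanSpace ℝ (Fin R × Fin N))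
    (hastar : astar ∈ calA N R) (hbstar : bstar ∈ calB F)
    (hmin : ∀ a' ∈ calA N R, ∀ b' ∈ calB F,
      ‖astar - bstar‖ ^ 2 ≤ ‖a' - b'‖ ^ 2)
    (xstar : EuclideanSpace ℝ (Fin N))
    (hxstar : ∀ n, xstar n = -∑ r : Fin R, bstar (r, n)) :
    (∀ z : EuclideanSpace ℝ (Fin N),
      lovasz Fsum xstar + ‖xstar‖ ^ 2 / 2 ≤ lovasz Fsum z + ‖z‖ ^ 2 / 2) ∧
    ∀ z : EuclideanSpace ℝ (Fin N),
      lovasz Fsum z + ‖z‖ ^ 2 / 2 = lovasz Fsum xstar + ‖xstar‖ ^ 2 / 2 →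
        z = xstar := by
  classical
  set sstar : EuclideanSpace ℝ (Fin N) := WithLp.toLp 2 (fun n => ∑ r, bstar (r, n)) with hsstar
  have hsn : ∀ n, sstar n = ∑ r, bstar (r, n) := fun n => by simp only [hsstar]
  have hxs : ∀ n, xstar n = - sstar n := fun n => by rw [hxstar n, hsn n]
  have hFsum0 : Fsum ∅ = 0 := by
    rw [hFsum]
    exact Finset.sum_eq_zero fun r _ => (hF r).1
  -- sstar is in the base polytope of Fsum
  have hsmem : sstar ∈ basePolytope Fsum := by
    constructor
    · intro A
      have h1 : ∑ n ∈ A, sstar n = ∑ r, ∑ n ∈ A, bstar (r, n) := by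
        simp only [hsn]; exact Finset.sum_comm
      rw [h1, hFsum]
      exact Finset.sum_le_sum fun r _ => (hbstar r).1 A
    · have h1 : ∑ n, sstar n = ∑ r, ∑ n, bstar (r, n) := by
        simp only [hsn]; exact Finset.sum_comm
      rw [h1, hFsum]
      exact Finset.sum_congr rfl fun r _ => (hbstar r).2
  -- Step B : minimality of the squared column sums
  have hB : ∀ b ∈ calB F, ∑ n, sstar n ^ 2 ≤ ∑ n, (∑ r, b (r, n)) ^ 2 := by
    intro b hb
    rcases Nat.eq_zero_or_pos R with hR | hR
    · subst hR
      have h0 : ∀ n : Fin N, sstar n = 0 := fun n => by simp [hsn]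
      have hz : ∑ n, sstar n ^ 2 = 0 := by simp [h0]
      rw [hz]
      positivity
    · have hRpos : (0 : ℝ) < R := by exact_mod_cast hR
      set t : Fin N → ℝ := fun n => ∑ r, b (r, n) with ht
      set a' : EuclideanSpace ℝ (Fin R × Fin N) := WithLp.toLp 2 (fun p => b p - t p.2 / R) with ha'
      have ha'A : a' ∈ calA N R := by
        intro n
        have : ∑ r : Fin R, a' (r, n) = (∑ r : Fin R, b (r, n)) - R * (t n / R) := by
          simp only [ha', Finset.sum_sub_distrib, Finset.sum_const, card_univ,
            Fintype.card_fin, nsmul_eq_mul]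
        rw [this, mul_div_cancel₀ _ (ne_of_gt hRpos)]
        simp [ht]
      have h1 := hmin a' ha'A b hb
      have h2 : ‖a' - b‖ ^ 2 = (∑ n, t n ^ 2) / R := by
        rw [norm_sq_eq_sum]
        have e1 : ∀ p : Fin R × Fin N, (a' - b) p ^ 2 = (t p.2 / R) ^ 2 := by
          intro p
          have : (a' - b) p = a' p - b p := rfl
          rw [this]
          simp only [ha']
          ring
        rw [Finset.sum_congr rfl fun p _ => e1 p]
        calc ∑ p : Fin R × Fin N, (t p.2 / (R:ℝ)) ^ 2
            = ∑ r : Fin R, ∑ n, (t n / (R:ℝ)) ^ 2 := by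
              rw [Fintype.sum_prod_type]
          _ = R * ∑ n, (t n / (R:ℝ)) ^ 2 := by
              rw [Finset.sum_const, card_univ, Fintype.card_fin, nsmul_eq_mul]
          _ = (∑ n, t n ^ 2) / R := by
              rw [Finset.mul_sum, Finset.sum_div]
              refine Finset.sum_congr rfl fun n _ => ?_
              field_simp
      have h3 : ∑ n, sstar n ^ 2 ≤ R * ‖astar - bstar‖ ^ 2 := by
        have e2 : ∀ p : Fin R × Fin N, (astar - bstar) p ^ 2
            = (bstar p - astar p) ^ 2 := by
          intro p
          have : (astar - bstar) p = astar p - bstar p := rfl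
          rw [this]; ring
        have hnorm : ‖astar - bstar‖ ^ 2
            = ∑ n, ∑ r : Fin R, (bstar (r, n) - astar (r, n)) ^ 2 := by
          rw [norm_sq_eq_sum, Finset.sum_congr rfl fun p _ => e2 p,
            Fintype.sum_prod_type, Finset.sum_comm]
        rw [hnorm, Finset.mul_sum]
        apply Finset.sum_le_sum
        intro n _
        have e3 : sstar n = ∑ r, (bstar (r, n) - astar (r, n)) := by
          rw [Finset.sum_sub_distrib, hastar n, hsn n, sub_zero]
        rw [e3]
        have := sq_sum_le_card_mul_sum_sq (s := (univ : Finset (Fin R)))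
          (f := fun r => bstar (r, n) - astar (r, n))
        simpa using this
      calc ∑ n, sstar n ^ 2 ≤ R * ‖astar - bstar‖ ^ 2 := h3
        _ ≤ R * ((∑ n, t n ^ 2) / R) := by
            rw [← h2]; exact mul_le_mul_of_nonneg_left h1 hRpos.le
        _ = ∑ n, t n ^ 2 := mul_div_cancel₀ _ (ne_of_gt hRpos)
  -- Step C : variational inequality
  have hC : ∀ b ∈ calB F, ∑ n, sstar n ^ 2 ≤ ∑ n, (∑ r, b (r, n)) * sstar n := by
    intro b hb
    set t : Fin N → ℝ := fun n => ∑ r, b (r, n) with ht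
    set c : ℝ := ∑ n, sstar n * (t n - sstar n) with hc
    set d : ℝ := ∑ n, (t n - sstar n) ^ 2 with hd'
    have hd : 0 ≤ d := Finset.sum_nonneg fun n _ => sq_nonneg _
    have key : ∀ lam : ℝ, 0 < lam → lam ≤ 1 → 0 ≤ 2 * c + lam * d := by
      intro lam hl0 hl1
      set bl : EuclideanSpace ℝ (Fin R × Fin N) :=
        WithLp.toLp 2 (fun p => (1 - lam) * bstar p + lam * b p) with hbl
      have hblB : bl ∈ calB F := by
        intro r
        constructor
        · intro A
          have e : ∑ n ∈ A, bl (r, n)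
              = (1 - lam) * ∑ n ∈ A, bstar (r, n) + lam * ∑ n ∈ A, b (r, n) := by
            simp only [hbl, Finset.sum_add_distrib, Finset.mul_sum]
          rw [e]
          have h1' := (hbstar r).1 A
          have h2' := (hb r).1 A
          nlinarith
        · have e : ∑ n, bl (r, n)
              = (1 - lam) * ∑ n, bstar (r, n) + lam * ∑ n, b (r, n) := by
            simp only [hbl, Finset.sum_add_distrib, Finset.mul_sum]
          rw [e, (hbstar r).2, (hb r).2]; ring
      have hBb := hB bl hblB
      have e2 : ∀ n, (∑ r, bl (r, n)) = sstar n + lam * (t n - sstar n) := by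
        intro n
        have : ∑ r, bl (r, n)
            = (1 - lam) * ∑ r, bstar (r, n) + lam * ∑ r, b (r, n) := by
          simp only [hbl, Finset.sum_add_distrib, Finset.mul_sum]
        have htn : t n = ∑ r, b (r, n) := by simp only [ht]
        rw [this, ← hsn n, ← htn]
        ring
      have e3 : ∑ n, (∑ r, bl (r, n)) ^ 2
          = ∑ n, sstar n ^ 2 + 2 * lam * c + lam ^ 2 * d := by
        rw [Finset.sum_congr rfl fun n _ => congrArg (· ^ 2) (e2 n)]
        have e4 : ∀ n : Fin N, (sstar n + lam * (t n - sstar n)) ^ 2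
            = sstar n ^ 2 + (2 * lam) * (sstar n * (t n - sstar n))
              + lam ^ 2 * ((t n - sstar n) ^ 2) := fun n => by ring
        rw [Finset.sum_congr rfl fun n _ => e4 n]
        rw [Finset.sum_add_distrib, Finset.sum_add_distrib, ← Finset.mul_sum,
          ← Finset.mul_sum, hc, hd']
      rw [e3] at hBb
      nlinarith
    have hc0 : 0 ≤ c := by
      by_contra hcontra
      push_neg at hcontra
      rcases eq_or_lt_of_le hd with hd0 | hd0
      · have := key 1 one_pos le_rfl
        rw [← hd0] at this; linarith
      · have hl : 0 < -c / d := div_pos (neg_pos.mpr hcontra) hd0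
        have h0 : 0 < min 1 (-c / d) := lt_min one_pos hl
        have h1 : min 1 (-c / d) ≤ 1 := min_le_left _ _
        have hk := key _ h0 h1
        have h2 : min 1 (-c / d) * d ≤ (-c / d) * d :=
          mul_le_mul_of_nonneg_right (min_le_right _ _) hd
        rw [div_mul_cancel₀ _ (ne_of_gt hd0)] at h2
        linarith
    have e5 : c = ∑ n, t n * sstar n - ∑ n, sstar n ^ 2 := by
      rw [hc, ← Finset.sum_sub_distrib]
      exact Finset.sum_congr rfl fun n _ => by ring
    rw [e5] at hc0
    simp only [ht] at hc0
    linarith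
  -- greedy machinery at xstar
  set σ : Equiv.Perm (Fin N) := Tuple.sort (fun i => -(xstar i)) with hσ
  have hsort : ∀ i j : Fin N, i ≤ j → xstar (σ j) ≤ xstar (σ i) := by
    intro i j hij
    have := Tuple.monotone_sort (fun i => -(xstar i)) hij
    simp only [Function.comp_apply] at this
    rw [hσ]
    linarith
  set bg : EuclideanSpace ℝ (Fin R × Fin N) :=
    WithLp.toLp 2 (fun p => greedy (F p.1) σ p.2) with hbg
  have hbgB : bg ∈ calB F := fun r => greedy_mem_basePolytope (hF r) σ
  have hgsum : ∀ n, greedy Fsum σ n = ∑ r, bg (r, n) := by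
    intro n
    simp only [hbg, greedy, hFsum, Finset.sum_sub_distrib]
  set K : ℝ := ∑ n, sstar n ^ 2 with hK
  have hub : ∀ s ∈ basePolytope Fsum, ⟪s, xstar⟫ ≤ -K := by
    intro s hs
    rw [inner_eq_sum]
    have h1 := inner_le_greedy hFsum0 hsort hs
    have h2 : ∑ n, greedy Fsum σ n * xstar n = -∑ n, (∑ r, bg (r, n)) * sstar n := by
      rw [← Finset.sum_neg_distrib]
      refine Finset.sum_congr rfl fun n _ => ?_
      rw [hgsum n, hxs n]; ring
    have h3 := hC bg hbgB
    rw [h2] at h1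
    rw [hK]
    linarith
  have hne : ∀ z : EuclideanSpace ℝ (Fin N),
      (⟪sstar, z⟫ : ℝ) ∈ {t | ∃ s ∈ basePolytope Fsum, t = ⟪s, z⟫} :=
    fun z => ⟨sstar, hsmem, rfl⟩
  have hbdd : ∀ z : EuclideanSpace ℝ (Fin N),
      BddAbove {t | ∃ s ∈ basePolytope Fsum, t = ⟪s, z⟫} := by
    intro z
    set σz : Equiv.Perm (Fin N) := Tuple.sort (fun i => -(z i)) with hσz
    have hsz : ∀ i j : Fin N, i ≤ j → z (σz j) ≤ z (σz i) := by
      intro i j hij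
      have := Tuple.monotone_sort (fun i => -(z i)) hij
      simp only [Function.comp_apply] at this
      rw [hσz]
      linarith
    refine ⟨∑ n, greedy Fsum σz n * z n, ?_⟩
    rintro u ⟨s, hs, rfl⟩
    rw [inner_eq_sum]
    exact inner_le_greedy hFsum0 hsz hs
  have hlow : ∀ z, (⟪sstar, z⟫ : ℝ) ≤ lovasz Fsum z :=
    fun z => le_csSup (hbdd z) (hne z)
  have hupx : lovasz Fsum xstar ≤ -K := by
    apply csSup_le ⟨_, hne xstar⟩
    rintro u ⟨s, hs, rfl⟩
    exact hub s hs
  have hinnerx : (⟪sstar, xstar⟫ : ℝ) = -K := by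
    rw [inner_eq_sum, hK, ← Finset.sum_neg_distrib]
    refine Finset.sum_congr rfl fun n _ => ?_
    rw [hxs n]; ring
  have hlx : lovasz Fsum xstar = -K := by
    refine le_antisymm hupx ?_
    have := hlow xstar
    rwa [hinnerx] at this
  have hnx : ‖xstar‖ ^ 2 = K := by
    rw [norm_sq_eq_sum, hK]
    refine Finset.sum_congr rfl fun n _ => ?_
    rw [hxs n]; ring
  constructor
  · intro z
    have h1 := hlow z
    rw [inner_eq_sum] at h1
    have h2 : ‖z‖ ^ 2 = ∑ n, z n ^ 2 := norm_sq_eq_sum z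
    have h3 : (0 : ℝ) ≤ ∑ n, (z n + sstar n) ^ 2 :=
      Finset.sum_nonneg fun n _ => sq_nonneg _
    have h4 : ∑ n, (z n + sstar n) ^ 2
        = ∑ n, z n ^ 2 + 2 * ∑ n, sstar n * z n + K := by
      have e : ∀ n : Fin N, (z n + sstar n) ^ 2
          = z n ^ 2 + 2 * (sstar n * z n) + sstar n ^ 2 := fun n => by ring
      rw [Finset.sum_congr rfl fun n _ => e n, Finset.sum_add_distrib,
        Finset.sum_add_distrib, ← Finset.mul_sum, hK]
    rw [hlx, hnx, h2]
    linarith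
  · intro z hz
    have h1 := hlow z
    rw [inner_eq_sum] at h1
    have h2 : ‖z‖ ^ 2 = ∑ n, z n ^ 2 := norm_sq_eq_sum z
    have h4 : ∑ n, (z n + sstar n) ^ 2
        = ∑ n, z n ^ 2 + 2 * ∑ n, sstar n * z n + K := by
      have e : ∀ n : Fin N, (z n + sstar n) ^ 2
          = z n ^ 2 + 2 * (sstar n * z n) + sstar n ^ 2 := fun n => by ring
      rw [Finset.sum_congr rfl fun n _ => e n, Finset.sum_add_distrib,
        Finset.sum_add_distrib, ← Finset.mul_sum, hK]
    rw [hlx, hnx, h2] at hz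
    have h5 : ∑ n, (z n + sstar n) ^ 2 ≤ 0 := by linarith
    have h3 : (0 : ℝ) ≤ ∑ n, (z n + sstar n) ^ 2 :=
      Finset.sum_nonneg fun n _ => sq_nonneg _
    have h6 := (Finset.sum_eq_zero_iff_of_nonneg
      (fun n (_ : n ∈ univ) => sq_nonneg (z n + sstar n))).mp (le_antisymm h5 h3)
    ext n
    have h7 := h6 n (Finset.mem_univ n)
    have h8 : z n + sstar n = 0 := by
      nlinarith [sq_nonneg (z n + sstar n)]
    rw [hxs n]
    linarith
end
end
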